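/- arXiv:2201.01063 — 5 statements merged into one kernel-verified Lean document; each statement's English description precedes it below -/
import Mathlib

section
/- Let n ≥ 2 and let B be the n×n binary matrix whose first row is (0,1,1,…,1) and whose remaining rows are zero. Then the real Bott manifold M(B) = (S¹)ⁿ/G(B) is homeomorphic to the n-dimensional Klein bottle K_n. -/
open Complex

/-- The relation on the `n`-torus generating the Klein identification
`(z₁,…,z_{n−1},z_n) ~ (z̄₁,…,z̄_{n−1},−z_n)`. -/
def kleinRel (n : ℕ) (z w : Fin n → Circle) : Prop :=
  ∀ i : Fin n, (w i : ℂ) = if (i : ℕ) = n - 1 then -(z i : ℂ) else (starRingEnd ℂ) (z i : ℂ)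

/-- The `n`-dimensional Klein bottle `K_n`, as the quotient of the torus. -/
def Klein (n : ℕ) : Type := Quot (kleinRel n)

noncomputable instance (n : ℕ) : TopologicalSpace (Klein n) := by unfold Klein; infer_instance

/-- The relation on the `n`-torus whose equivalence closure is the orbit relation of the
group `G(A)` generated by the Bott involutions `a₁, …, a_n` of the binary matrix `A`:
the `i`-th involution negates the `i`-th coordinate and conjugates the `j`-th coordinate
exactly when `Aⁱⱼ = 1`. -/
def bottRel (n : ℕ) (A : Fin n → Fin n → Bool) (z w : Fin n → Circle) : Prop :=
  ∃ i : Fin n, ∀ j : Fin n,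
    (w j : ℂ) =
      if j = i then -(z j : ℂ)
      else if A i j then (starRingEnd ℂ) (z j : ℂ) else (z j : ℂ)

/-- The real Bott manifold `M(A) = (S¹)ⁿ / G(A)`. -/
def BottManifold (n : ℕ) (A : Fin n → Fin n → Bool) : Type := Quot (bottRel n A)

noncomputable instance (n : ℕ) (A : Fin n → Fin n → Bool) : TopologicalSpace (BottManifold n A) := by
  unfold BottManifold; infer_instance

namespace BKAux

open Topology

/-! ### Elementary circle lemmas -/

noncomputable def negC (z : Circle) : Circle := Circle.exp Real.pi * z

lemma negC_coe (z : Circle) : (negC z : ℂ) = -(z : ℂ) := by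
  simp [negC, Circle.coe_exp, Complex.exp_pi_mul_I]

lemma sq_coe (z : Circle) : ((z ^ 2 : Circle) : ℂ) = (z : ℂ) ^ 2 := by
  rw [sq, sq, Circle.coe_mul]

lemma sqrtC (w : Circle) : (Circle.exp (arg (w : ℂ) / 2)) ^ 2 = w := by
  rw [sq, ← Circle.exp_add,
    show arg (w : ℂ) / 2 + arg (w : ℂ) / 2 = arg (w : ℂ) by ring, Circle.exp_arg]

lemma sq_cases {a b : ℂ} (h : a ^ 2 = b ^ 2) : a = b ∨ a = -b := by
  have := mul_self_eq_mul_self_iff (a := a) (b := b)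
  rw [← sq, ← sq] at this
  tauto

/-! ### The covering map `F` from the torus to itself -/

noncomputable def Fmap (n : ℕ) (hn : 2 ≤ n) (z : Fin n → Circle) : Fin n → Circle :=
  fun j => if _ : (j : ℕ) = n - 1 then z ⟨0, by omega⟩
    else (z ⟨(j : ℕ) + 1, by have := j.isLt; omega⟩) ^ 2

lemma Fmap_cont (n : ℕ) (hn : 2 ≤ n) : Continuous (Fmap n hn) := by
  apply continuous_pi
  intro j
  unfold Fmap
  by_cases h : (j : ℕ) = n - 1
  · simp only [h, dif_pos]
    exact continuous_apply _
  · simp only [h, dif_neg, not_false_iff]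
    exact (continuous_apply _).pow 2

lemma Fmap_surj (n : ℕ) (hn : 2 ≤ n) : Function.Surjective (Fmap n hn) := by
  intro w
  refine ⟨fun j => if _ : (j : ℕ) = 0 then w ⟨n - 1, by omega⟩
    else Circle.exp (arg (w ⟨(j : ℕ) - 1, by have := j.isLt; omega⟩ : ℂ) / 2), ?_⟩
  funext j
  unfold Fmap
  by_cases h : (j : ℕ) = n - 1
  · rw [dif_pos h]
    simp only [Fin.val_mk]
    rw [dif_pos trivial]
    congr 1
    ext
    simp [h]
  · rw [dif_neg h]
    simp only [Fin.val_mk, Nat.add_sub_cancel, Fin.eta]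
    rw [dif_neg (by omega : ¬((j : ℕ) + 1 = 0)), sqrtC]

lemma Fmap_last (n : ℕ) (hn : 2 ≤ n) (z : Fin n → Circle) :
    Fmap n hn z ⟨n - 1, by omega⟩ = z ⟨0, by omega⟩ := by
  unfold Fmap
  rw [dif_pos (show ((⟨n - 1, by omega⟩ : Fin n) : ℕ) = n - 1 from rfl)]

lemma Fmap_lt (n : ℕ) (hn : 2 ≤ n) (z : Fin n → Circle) (j : Fin n) (hj : 1 ≤ (j : ℕ)) :
    Fmap n hn z ⟨(j : ℕ) - 1, by have := j.isLt; omega⟩ = (z j) ^ 2 := by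
  unfold Fmap
  rw [dif_neg (by simp only [Fin.val_mk]; have := j.isLt; omega :
    ¬((⟨(j : ℕ) - 1, by have := j.isLt; omega⟩ : Fin n) : ℕ) = n - 1)]
  have hidx : ((j : ℕ) - 1) + 1 = (j : ℕ) := by omega
  simp only [Fin.val_mk, hidx, Fin.eta]

/-! ### Characterization of the Klein equivalence -/

lemma klein_symm {n : ℕ} {u v : Fin n → Circle} (h : kleinRel n u v) : kleinRel n v u := by
  intro i
  have hi := h i
  by_cases hc : (i : ℕ) = n - 1 <;> simp only [hc, if_true, if_false] <;>
    simp only [hc, if_true, if_false] at hi <;> rw [hi] <;> simp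

lemma klein_trans_eq {n : ℕ} {u v x : Fin n → Circle} (h1 : kleinRel n u v)
    (h2 : kleinRel n v x) : u = x := by
  funext i
  apply Circle.ext
  have hi1 := h1 i
  have hi2 := h2 i
  by_cases hc : (i : ℕ) = n - 1 <;> simp only [hc, if_true, if_false] at hi1 hi2 <;>
    rw [hi2, hi1] <;> simp

lemma klein_char {n : ℕ} {u v : Fin n → Circle} (h : Relation.EqvGen (kleinRel n) u v) :
    u = v ∨ kleinRel n u v := by
  induction h with
  | rel a b hab => exact Or.inr hab
  | refl a => exact Or.inl rfl
  | symm a b _ ih =>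
    rcases ih with rfl | hk
    · exact Or.inl rfl
    · exact Or.inr (klein_symm hk)
  | trans a b c _ _ ih1 ih2 =>
    rcases ih1 with rfl | hk1
    · exact ih2
    · rcases ih2 with rfl | hk2
      · exact Or.inr hk1
      · exact Or.inl (klein_trans_eq hk1 hk2)

/-! ### Generation lemmas for the Bott equivalence -/

variable {n : ℕ} {B : Fin n → Fin n → Bool}

lemma bott_signs (hn : 2 ≤ n)
    (hB : ∀ i j : Fin n, B i j = decide ((i : ℕ) = 0 ∧ 1 ≤ (j : ℕ))) (m : ℕ) :
    ∀ z w : Fin n → Circle,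
      (w ⟨0, by omega⟩ : ℂ) = (z ⟨0, by omega⟩ : ℂ) →
      (∀ j : Fin n, 1 ≤ (j : ℕ) → ((w j : ℂ) = (z j : ℂ) ∨ (w j : ℂ) = -(z j : ℂ))) →
      (∀ j : Fin n, m ≤ (j : ℕ) → (w j : ℂ) = (z j : ℂ)) →
      Relation.EqvGen (bottRel n B) z w := by
  induction m with
  | zero =>
    intro z w _ _ hm
    have : z = w := funext fun j => Circle.ext ((hm j (Nat.zero_le _)).symm)
    exact this ▸ Relation.EqvGen.refl z
  | succ m ih =>
    intro z w h0 hs hm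
    rcases Nat.lt_or_ge m n with hmn | hmn
    · rcases Nat.eq_zero_or_pos m with rfl | hm1
      · have : z = w := by
          funext j
          apply Circle.ext
          rcases Nat.eq_zero_or_pos (j : ℕ) with hj0 | hj1
          · have : j = ⟨0, by omega⟩ := Fin.ext hj0
            rw [this]
            exact h0.symm
          · exact (hm j hj1).symm
        exact this ▸ Relation.EqvGen.refl z
      · set idx : Fin n := ⟨m, hmn⟩ with hidx
        rcases hs idx hm1 with he | hne
        · refine ih z w h0 hs (fun j hj => ?_)
          rcases Nat.eq_or_lt_of_le hj with hj' | hj'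
          · have : j = idx := Fin.ext hj'.symm
            rw [this]; exact he
          · exact hm j hj'
        · set z' : Fin n → Circle := fun j => if (j : ℕ) = m then negC (z j) else z j with hz'
          have hrel : bottRel n B z z' := by
            refine ⟨idx, fun j => ?_⟩
            rw [hB]
            by_cases hj : (j : ℕ) = m
            · have hji : j = idx := Fin.ext hj
              rw [if_pos hji, hz']
              simp only [hj, if_true]
              exact negC_coe (z j)
            · have hji : ¬ j = idx := fun he' => hj (by rw [he'])
              rw [if_neg hji, if_neg (by simp [hidx]; omega), hz']
              simp only [hj, if_false]
          refine Relation.EqvGen.trans _ _ _ (Relation.EqvGen.rel _ _ hrel) (ih z' w ?_ ?_ ?_)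
          · have : ¬ ((⟨0, by omega⟩ : Fin n) : ℕ) = m := by simp; omega
            rw [hz']
            simp only [this, if_false]
            exact h0
          · intro j hj
            by_cases hjm : (j : ℕ) = m
            · left
              have hji : j = idx := Fin.ext hjm
              rw [hz']
              simp only [hjm, if_true, negC_coe]
              rw [hji]
              exact hne
            · rw [hz']
              simp only [hjm, if_false]
              exact hs j hj
          · intro j hj
            by_cases hjm : (j : ℕ) = m
            · have hji : j = idx := Fin.ext hjm
              rw [hz']
              simp only [hjm, if_true, negC_coe]
              rw [hji]
              exact hne
            · rw [hz']
              simp only [hjm, if_false]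
              exact hm j (by omega)
    · refine ih z w h0 hs (fun j hj => absurd j.isLt (by omega))

lemma bott_conj (hn : 2 ≤ n)
    (hB : ∀ i j : Fin n, B i j = decide ((i : ℕ) = 0 ∧ 1 ≤ (j : ℕ)))
    (z w : Fin n → Circle)
    (h0 : (w ⟨0, by omega⟩ : ℂ) = -((z ⟨0, by omega⟩ : ℂ)))
    (hs : ∀ j : Fin n, 1 ≤ (j : ℕ) →
      ((w j : ℂ) = (starRingEnd ℂ) (z j : ℂ) ∨ (w j : ℂ) = -((starRingEnd ℂ) (z j : ℂ)))) :
    Relation.EqvGen (bottRel n B) z w := by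
  set z' : Fin n → Circle := fun j => if (j : ℕ) = 0 then negC (z j) else (z j)⁻¹ with hz'
  have hrel : bottRel n B z z' := by
    refine ⟨⟨0, by omega⟩, fun j => ?_⟩
    rw [hB]
    by_cases hj : (j : ℕ) = 0
    · have hji : j = (⟨0, by omega⟩ : Fin n) := Fin.ext hj
      rw [if_pos hji, hz']
      simp only [hj, if_true]
      exact negC_coe (z j)
    · have hji : ¬ j = (⟨0, by omega⟩ : Fin n) := fun he' => hj (by rw [he'])
      rw [if_neg hji, if_pos (by simp; omega), hz']
      simp only [hj, if_false]
      exact Circle.coe_inv_eq_conj (z j)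
  refine Relation.EqvGen.trans _ _ _ (Relation.EqvGen.rel _ _ hrel)
    (bott_signs hn hB n z' w ?_ ?_ (fun j hj => absurd j.isLt (by omega)))
  · rw [hz']
    simp only [Fin.val_mk, if_true, negC_coe]
    exact h0
  · intro j hj
    have hj0 : ¬ (j : ℕ) = 0 := by omega
    rw [hz']
    simp only [hj0, if_false, Circle.coe_inv_eq_conj]
    exact hs j hj

/-! ### `F` intertwines the two relations -/

lemma bott_to_klein (hn : 2 ≤ n)
    (hB : ∀ i j : Fin n, B i j = decide ((i : ℕ) = 0 ∧ 1 ≤ (j : ℕ)))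
    (z w : Fin n → Circle) (h : bottRel n B z w) :
    Quot.mk (kleinRel n) (Fmap n hn z) = Quot.mk (kleinRel n) (Fmap n hn w) := by
  obtain ⟨i, hi⟩ := h
  by_cases h0 : (i : ℕ) = 0
  · apply Quot.sound
    intro j
    by_cases hj : (j : ℕ) = n - 1
    · rw [if_pos hj]
      have hj' : j = ⟨n - 1, by omega⟩ := Fin.ext hj
      rw [hj', Fmap_last, Fmap_last]
      have hzero := hi ⟨0, by omega⟩
      rw [if_pos (Fin.ext (by simp [h0]) : (⟨0, by omega⟩ : Fin n) = i)] at hzero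
      exact hzero
    · rw [if_neg hj]
      have hlt : (j : ℕ) + 1 < n := by have := j.isLt; omega
      have hj2 : j = ⟨((⟨(j : ℕ) + 1, hlt⟩ : Fin n) : ℕ) - 1, by
          have := (⟨(j : ℕ) + 1, hlt⟩ : Fin n).isLt; omega⟩ :=
        Fin.ext (by simp)
      rw [hj2, Fmap_lt n hn z ⟨(j : ℕ) + 1, hlt⟩ (by simp),
        Fmap_lt n hn w ⟨(j : ℕ) + 1, hlt⟩ (by simp)]
      have hij := hi ⟨(j : ℕ) + 1, hlt⟩
      rw [if_neg (by intro he; rw [← he] at h0; simp at h0), hB,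
        if_pos (by simp only [decide_eq_true_eq]; exact ⟨h0, by simp⟩)] at hij
      rw [sq_coe, sq_coe, hij, map_pow]
  · apply congrArg
    funext j
    apply Circle.ext
    unfold Fmap
    by_cases hj : (j : ℕ) = n - 1
    · rw [dif_pos hj, dif_pos hj]
      have hzero := hi ⟨0, by omega⟩
      rw [if_neg (by intro he; rw [← he] at h0; exact h0 rfl), hB,
        if_neg (by simp)] at hzero
      exact hzero.symm
    · rw [dif_neg hj, dif_neg hj, sq_coe, sq_coe]
      have hlt : (j : ℕ) + 1 < n := by have := j.isLt; omega
      have hij := hi ⟨(j : ℕ) + 1, hlt⟩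
      by_cases hji : (⟨(j : ℕ) + 1, hlt⟩ : Fin n) = i
      · rw [if_pos hji] at hij
        rw [hij]; ring
      · rw [if_neg hji, hB, if_neg (by simp [h0])] at hij
        rw [hij]

/-! ### The induced map on quotients -/

noncomputable def eMap (n : ℕ) (hn : 2 ≤ n) (B : Fin n → Fin n → Bool)
    (hB : ∀ i j : Fin n, B i j = decide ((i : ℕ) = 0 ∧ 1 ≤ (j : ℕ))) :
    BottManifold n B → Klein n :=
  Quot.lift (fun z => Quot.mk (kleinRel n) (Fmap n hn z))
    (fun z w h => bott_to_klein hn hB z w h)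

lemma eMap_mk (hn : 2 ≤ n) (hB : ∀ i j : Fin n, B i j = decide ((i : ℕ) = 0 ∧ 1 ≤ (j : ℕ)))
    (z : Fin n → Circle) :
    eMap n hn B hB (Quot.mk _ z) = Quot.mk (kleinRel n) (Fmap n hn z) := rfl

lemma eMap_cont (hn : 2 ≤ n)
    (hB : ∀ i j : Fin n, B i j = decide ((i : ℕ) = 0 ∧ 1 ≤ (j : ℕ))) :
    Continuous (eMap n hn B hB) :=
  continuous_quot_lift _ (continuous_quot_mk.comp (Fmap_cont n hn))

lemma eMap_inj (hn : 2 ≤ n)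
    (hB : ∀ i j : Fin n, B i j = decide ((i : ℕ) = 0 ∧ 1 ≤ (j : ℕ))) :
    Function.Injective (eMap n hn B hB) := by
  intro a b h
  obtain ⟨z, rfl⟩ := Quot.exists_rep a
  obtain ⟨w, rfl⟩ := Quot.exists_rep b
  apply Quot.eqvGen_sound
  have h' : Quot.mk (kleinRel n) (Fmap n hn z) = Quot.mk (kleinRel n) (Fmap n hn w) := h
  rcases klein_char (Quot.eqvGen_exact h') with heq | hk
  · refine bott_signs hn hB n z w ?_ ?_ (fun j hj => absurd j.isLt (by omega))
    · have hc := congrFun heq ⟨n - 1, by omega⟩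
      rw [Fmap_last, Fmap_last] at hc
      exact (congrArg Subtype.val hc).symm
    · intro j hj
      have hc := congrFun heq ⟨(j : ℕ) - 1, by have := j.isLt; omega⟩
      rw [Fmap_lt n hn z j hj, Fmap_lt n hn w j hj] at hc
      have h2 : (w j : ℂ) ^ 2 = (z j : ℂ) ^ 2 := by
        rw [← sq_coe, ← sq_coe, hc]
      exact sq_cases h2
  · refine bott_conj hn hB z w ?_ ?_
    · have hc := hk ⟨n - 1, by omega⟩
      rw [if_pos (show ((⟨n - 1, by omega⟩ : Fin n) : ℕ) = n - 1 from rfl),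
        Fmap_last, Fmap_last] at hc
      exact hc
    · intro j hj
      have hc := hk ⟨(j : ℕ) - 1, by have := j.isLt; omega⟩
      rw [if_neg (by simp only [Fin.val_mk]; have := j.isLt; omega),
        Fmap_lt n hn z j hj, Fmap_lt n hn w j hj, sq_coe, sq_coe, map_pow] at hc
      exact sq_cases hc

lemma eMap_surj (hn : 2 ≤ n)
    (hB : ∀ i j : Fin n, B i j = decide ((i : ℕ) = 0 ∧ 1 ≤ (j : ℕ))) :
    Function.Surjective (eMap n hn B hB) := by
  intro q
  obtain ⟨w, rfl⟩ := Quot.exists_rep q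
  obtain ⟨z, hz⟩ := Fmap_surj n hn w
  exact ⟨Quot.mk _ z, by rw [eMap_mk, hz]⟩

lemma eMap_qm (hn : 2 ≤ n)
    (hB : ∀ i j : Fin n, B i j = decide ((i : ℕ) = 0 ∧ 1 ≤ (j : ℕ))) :
    IsQuotientMap (eMap n hn B hB) := by
  have hF : IsQuotientMap (Fmap n hn) :=
    (Fmap_cont n hn).isClosedMap.isQuotientMap (Fmap_cont n hn) (Fmap_surj n hn)
  have hq : IsQuotientMap ((Quot.mk (kleinRel n)) ∘ (Fmap n hn)) :=
    isQuotientMap_quot_mk.comp hF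
  exact IsQuotientMap.of_comp continuous_quot_mk (eMap_cont hn hB) hq

end BKAux

/-- For `n ≥ 2`, the real Bott manifold of the Bott matrix `B` whose
first row is `(0,1,1,…,1)` and whose other rows vanish is homeomorphic to the
`n`-dimensional Klein bottle `K_n`. -/
theorem bottManifold_homeomorph_klein (n : ℕ) (hn : 2 ≤ n)
    (B : Fin n → Fin n → Bool)
    (hB : ∀ i j : Fin n, B i j = decide ((i : ℕ) = 0 ∧ 1 ≤ (j : ℕ))) :
    Nonempty (BottManifold n B ≃ₜ Klein n) := by
  have hopen : IsOpenMap (BKAux.eMap n hn B hB) := by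
    intro U hU
    rw [← (BKAux.eMap_qm hn hB).isOpen_preimage,
      Set.preimage_image_eq U (BKAux.eMap_inj hn hB)]
    exact hU
  exact ⟨Equiv.toHomeomorphOfContinuousOpen
    (Equiv.ofBijective _ ⟨BKAux.eMap_inj hn hB, BKAux.eMap_surj hn hB⟩)
    (BKAux.eMap_cont hn hB) hopen⟩
end

section
/- Let n ≥ 2. The n-dimensional Klein bottle K_n is homeomorphic to the twisted product S¹ ×_{ℤ/2} (ℝP¹)^{n−1}, i.e., to the quotient of S¹ × (ℝP¹)^{n−1} by the free involution (z, [w₂],…,[w_n]) ↦ (−z, [w̄₂],…,[w̄_n]), where ℝP¹ is realized as the quotient of the unit circle S¹ ⊂ ℂ by the antipodal identification w ~ −w and [w] denotes the class of w. -/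
open Complex

/-- Complex conjugation on the unit circle. -/
noncomputable def conjCircle (z : Circle) : Circle :=
  ⟨(starRingEnd ℂ) (z : ℂ), by
    have h := z.2
    simp only [Submonoid.unitSphere, Submonoid.mem_mk, Subsemigroup.mem_mk,
      mem_sphere_zero_iff_norm] at h ⊢
    simp [h]⟩

/-- `ℝP¹`, realized as the quotient of the unit circle `S¹ ⊂ ℂ` by the antipodal
identification `w ~ −w`. -/
def RP1 : Type := Quot (fun w v : Circle => (v : ℂ) = -(w : ℂ))

noncomputable instance : TopologicalSpace RP1 := by unfold RP1; infer_instance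

/-- Complex conjugation descends to an involution `[w] ↦ [w̄]` of `ℝP¹`. -/
noncomputable def RP1.conj : RP1 → RP1 :=
  Quot.lift (fun w => Quot.mk _ (conjCircle w)) (by
    intro a b hab
    apply Quot.sound
    show (conjCircle b : ℂ) = -(conjCircle a : ℂ)
    simp [conjCircle, hab])

/-- The relation on `S¹ × (ℝP¹)^{n−1}` generating the twisting involution
`(z, [w₂],…,[w_n]) ↦ (−z, [w̄₂],…,[w̄_n])`. -/
noncomputable def twistRel (n : ℕ) (x y : Circle × (Fin (n - 1) → RP1)) : Prop :=
  (y.1 : ℂ) = -(x.1 : ℂ) ∧ ∀ i, y.2 i = RP1.conj (x.2 i)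

/-- The twisted product `S¹ ×_{ℤ/2} (ℝP¹)^{n−1}`. -/
noncomputable def TwistedProd (n : ℕ) : Type := Quot (twistRel n)

noncomputable instance (n : ℕ) : TopologicalSpace (TwistedProd n) := by
  unfold TwistedProd; infer_instance

instance : CompactSpace RP1 := by unfold RP1; exact Quot.compactSpace

/-- The squaring map `RP1 → Circle`. -/
noncomputable def sqMap : RP1 → Circle :=
  Quot.lift (fun w => w * w) (by
    intro a b h
    ext
    show ((a : Circle) : ℂ) * a = (b : ℂ) * b
    rw [h]; ring)

lemma continuous_sqMap : Continuous sqMap :=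
  continuous_quot_lift _ (continuous_id.mul continuous_id)

lemma sqMap_bijective : Function.Bijective sqMap := by
  constructor
  · intro a b
    refine Quot.induction_on₂ a b ?_
    intro x y h
    have h' : (x : ℂ) * x = (y : ℂ) * y := congrArg (Subtype.val) h
    rcases mul_self_eq_mul_self_iff.mp h' with h2 | h2
    · exact congrArg _ (Circle.ext h2)
    · exact (Quot.sound (r := fun w v : Circle => (v : ℂ) = -(w : ℂ)) h2).symm
  · intro z
    refine ⟨Quot.mk _ (Circle.exp (Complex.arg z / 2)), ?_⟩
    show Circle.exp (Complex.arg z / 2) * Circle.exp (Complex.arg z / 2) = z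
    rw [← Circle.exp_add, add_halves]
    exact Circle.exp_arg z

noncomputable def sqEquiv : RP1 ≃ Circle := Equiv.ofBijective sqMap sqMap_bijective

noncomputable def sqHomeo : RP1 ≃ₜ Circle :=
  @Continuous.homeoOfEquivCompactToT2 _ _ _ _ _ _ sqEquiv continuous_sqMap

lemma sqHomeo_conj (p : RP1) : (sqHomeo (RP1.conj p) : ℂ) = (starRingEnd ℂ) (sqHomeo p : ℂ) := by
  refine Quot.induction_on p ?_
  intro v
  show ((conjCircle v * conjCircle v : Circle) : ℂ) = (starRingEnd ℂ) ((v * v : Circle) : ℂ)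
  simp [conjCircle]
  rfl

lemma sqHomeo_symm_conj (u : Circle) :
    sqHomeo.symm (conjCircle u) = RP1.conj (sqHomeo.symm u) := by
  apply sqHomeo.injective
  rw [sqHomeo.apply_symm_apply]
  ext
  rw [sqHomeo_conj, sqHomeo.apply_symm_apply]
  rfl

namespace KleinTwist

variable (m : ℕ)

/-- Underlying map torus → `S¹ × (ℝP¹)^m`. -/
noncomputable def f0 (z : Fin (m + 1) → Circle) : Circle × (Fin m → RP1) :=
  (z ⟨m, Nat.lt_succ_self m⟩,
   fun i => sqHomeo.symm (z ⟨(i : ℕ), i.2.trans (Nat.lt_succ_self m)⟩))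

/-- Underlying map `S¹ × (ℝP¹)^m` → torus. -/
noncomputable def g1 (x : Circle × (Fin m → RP1)) : Fin (m + 1) → Circle :=
  fun i => if h : (i : ℕ) = m then x.1
    else sqHomeo (x.2 ⟨(i : ℕ), lt_of_le_of_ne (Nat.lt_succ_iff.mp i.2) h⟩)

noncomputable def F : Klein (m + 1) → TwistedProd (m + 1) :=
  Quot.lift (fun z => Quot.mk _ (f0 m z)) (by
    intro z w h
    apply Quot.sound
    constructor
    · have := h ⟨m, Nat.lt_succ_self m⟩
      simpa [f0] using this
    · intro i
      show sqHomeo.symm (w _) = RP1.conj (sqHomeo.symm (z _))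
      have hi := h ⟨(i : ℕ), i.2.trans (Nat.lt_succ_self m)⟩
      rw [if_neg (by simpa using (Nat.ne_of_lt i.2))] at hi
      have : w ⟨(i : ℕ), i.2.trans (Nat.lt_succ_self m)⟩
          = conjCircle (z ⟨(i : ℕ), i.2.trans (Nat.lt_succ_self m)⟩) := Circle.ext hi
      rw [this, sqHomeo_symm_conj])

noncomputable def G : TwistedProd (m + 1) → Klein (m + 1) :=
  Quot.lift (fun x => Quot.mk _ (g1 m x)) (by
    intro x y h
    apply Quot.sound
    intro i
    by_cases hi : (i : ℕ) = m
    · rw [if_pos (by simpa using hi)]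
      show ((g1 m y i : Circle) : ℂ) = -((g1 m x i : Circle) : ℂ)
      simp only [g1, dif_pos hi]
      exact h.1
    · rw [if_neg (by simpa using hi)]
      show ((g1 m y i : Circle) : ℂ) = (starRingEnd ℂ) ((g1 m x i : Circle) : ℂ)
      simp only [g1, dif_neg hi]
      rw [h.2]
      exact sqHomeo_conj _)

lemma left_inv : Function.LeftInverse (G m) (F m) := by
  intro a
  refine Quot.induction_on a ?_
  intro z
  show Quot.mk _ (g1 m (f0 m z)) = Quot.mk _ z
  congr 1
  funext i
  by_cases hi : (i : ℕ) = m
  · simp only [g1, dif_pos hi, f0]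
    congr 1
    exact Fin.ext hi.symm
  · simp only [g1, dif_neg hi, f0]
    rw [Homeomorph.apply_symm_apply]

lemma right_inv : Function.RightInverse (G m) (F m) := by
  intro a
  refine Quot.induction_on a ?_
  intro x
  show Quot.mk _ (f0 m (g1 m x)) = Quot.mk _ x
  congr 1
  refine Prod.ext ?_ ?_
  · show g1 m x ⟨m, Nat.lt_succ_self m⟩ = x.1
    simp [g1]
  · funext i
    show sqHomeo.symm (g1 m x ⟨(i : ℕ), _⟩) = x.2 i
    simp only [g1, dif_neg (Nat.ne_of_lt i.2)]
    rw [Homeomorph.symm_apply_apply]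

lemma continuous_F : Continuous (F m) := by
  apply continuous_quot_lift
  apply continuous_quot_mk.comp
  exact (continuous_apply _).prodMk
    (continuous_pi fun i => sqHomeo.symm.continuous.comp (continuous_apply _))

lemma continuous_G : Continuous (G m) := by
  apply continuous_quot_lift
  apply continuous_quot_mk.comp
  refine continuous_pi fun i => ?_
  by_cases hi : (i : ℕ) = m
  · simp only [g1, dif_pos hi]
    exact continuous_fst
  · simp only [g1, dif_neg hi]
    exact sqHomeo.continuous.comp ((continuous_apply _).comp continuous_snd)

noncomputable def homeo : Klein (m + 1) ≃ₜ TwistedProd (m + 1) where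
  toFun := F m
  invFun := G m
  left_inv := left_inv m
  right_inv := right_inv m
  continuous_toFun := continuous_F m
  continuous_invFun := continuous_G m

end KleinTwist

/-- For `n ≥ 2`, the `n`-dimensional Klein bottle is homeomorphic to the
twisted product `S¹ ×_{ℤ/2} (ℝP¹)^{n−1}`. -/
theorem klein_homeomorph_twistedProd (n : ℕ) (hn : 2 ≤ n) :
    Nonempty (Klein n ≃ₜ TwistedProd n) := by
  obtain ⟨m, rfl⟩ : ∃ m, n = m + 1 := ⟨n - 1, by omega⟩
  exact ⟨KleinTwist.homeo m⟩
end

section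
/- Let n ≥ 2. The n-dimensional Klein bottle K_n is homeomorphic to the small cover X(Iⁿ, χ), i.e., to the quotient ((𝔽₂ⁿ) × [−1,1]ⁿ)/~, where (t,p) ~ (u,p) whenever t + u lies in the subgroupของ 𝔽₂ⁿ generated by {c_j : p ∈ F_j, 1 ≤ j ≤ 2n}. -/
open Complex

/-- The cube `Iⁿ = [−1,1]ⁿ`. -/
abbrev Cube (n : ℕ) : Type := Fin n → (Set.Icc (-1 : ℝ) 1)

/-- The columns `c₁, …, c_{2n}` of the characteristic matrix `χ` (indexed from `0`):
`c_j = e_j` for `1 ≤ j ≤ n`, `c_{n+1} = e₁ + ⋯ + e_n`, and `c_{n+i} = e_i` for `2 ≤ i ≤ n`. -/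
def cubeCol (n : ℕ) (j : Fin (2 * n)) : Fin n → ZMod 2 :=
  if h : (j : ℕ) < n then Pi.single ⟨(j : ℕ), h⟩ 1
  else if (j : ℕ) = n then (fun _ => 1)
  else Pi.single ⟨(j : ℕ) - n, by have := j.2; omega⟩ 1

/-- Membership of a point of the cube in the facet `F_j`, where `F_i = {x : x_i = −1}` and
`F_{n+i} = {x : x_i = 1}` for `1 ≤ i ≤ n`. -/
def cubeFacetMem (n : ℕ) (p : Cube n) (j : Fin (2 * n)) : Prop :=
  if h : (j : ℕ) < n then (p ⟨(j : ℕ), h⟩ : ℝ) = -1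
  else (p ⟨(j : ℕ) - n, by have := j.2; omega⟩ : ℝ) = 1

/-- The small cover relation on `𝔽₂ⁿ × Iⁿ`: `(t,p) ~ (u,q)` iff `p = q` and `t + u` lies in
the subgroup of `𝔽₂ⁿ` generated by the columns `c_j` over all facets `F_j` containing `p`. -/
def smallCoverRel (n : ℕ) (x y : (Fin n → ZMod 2) × Cube n) : Prop :=
  x.2 = y.2 ∧
    x.1 + y.1 ∈ Submodule.span (ZMod 2)
      {v | ∃ j : Fin (2 * n), cubeFacetMem n x.2 j ∧ v = cubeCol n j}

/-- The small cover `X(Iⁿ, χ)`. -/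
def SmallCoverCube (n : ℕ) : Type := Quot (smallCoverRel n)

instance (n : ℕ) : TopologicalSpace (SmallCoverCube n) := by
  unfold SmallCoverCube; infer_instance

/- ### auxiliary development -/
namespace KleinSC

noncomputable section
open Real

/-- negation on the circle -/
def cneg (z : Circle) : Circle :=
  ⟨-(z : ℂ), by show _ ∈ Metric.sphere _ _; simp [mem_sphere_zero_iff_norm]; exact Circle.norm_coe z⟩

@[simp] lemma cneg_coe (z : Circle) : ((cneg z : Circle) : ℂ) = -(z : ℂ) := rfl

lemma cneg_cneg (z : Circle) : cneg (cneg z) = z := by ext; simp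

lemma continuous_cneg : Continuous cneg := by
  apply Continuous.subtype_mk
  exact continuous_neg.comp continuous_induced_dom

lemma ccoe : Continuous ((↑) : Circle → ℂ) := continuous_induced_dom

lemma e01 : ∀ e : ZMod 2, e = 0 ∨ e = 1 := by decide

lemma circle_sq (z : Circle) : ((z : ℂ)).re ^ 2 + ((z : ℂ)).im ^ 2 = 1 := by
  have := Circle.normSq_coe z; rw [Complex.normSq_apply] at this; nlinarith

lemma circle_re_le (z : Circle) : ((z : ℂ)).re ≤ 1 := by nlinarith [circle_sq z]

lemma circle_le_re (z : Circle) : -1 ≤ ((z : ℂ)).re := by nlinarith [circle_sq z]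

lemma exp_re (t : ℝ) : ((Circle.exp t : ℂ)).re = Real.cos t := by
  rw [Circle.coe_exp, Complex.exp_ofReal_mul_I_re]

lemma exp_im (t : ℝ) : ((Circle.exp t : ℂ)).im = Real.sin t := by
  rw [Circle.coe_exp]; simpa using Complex.exp_ofReal_mul_I_im t

lemma sqrt_one_sub_sq (z : Circle) : Real.sqrt (1 - ((z : ℂ)).re ^ 2) = |((z : ℂ)).im| := by
  rw [show 1 - ((z : ℂ)).re ^ 2 = ((z : ℂ)).im ^ 2 by nlinarith [circle_sq z]]
  exact Real.sqrt_sq_eq_abs _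

/-- sign associated to an element of `ZMod 2` -/
def sg (e : ZMod 2) : ℝ := if e = 0 then 1 else -1

@[simp] lemma sg_zero : sg 0 = 1 := rfl
@[simp] lemma sg_one : sg (1 : ZMod 2) = -1 := rfl

lemma sg_add_one (e : ZMod 2) : sg (e + 1) = -sg e := by
  rcases e01 e with h | h <;> subst h
  · norm_num [sg]
  · rw [show (1 + 1 : ZMod 2) = 0 from by decide]; norm_num [sg]

lemma cos_sg (e : ZMod 2) (t : ℝ) : Real.cos (sg e * t) = Real.cos t := by
  rcases e01 e with h | h <;> subst h <;> simp

lemma sin_sg (e : ZMod 2) (t : ℝ) : Real.sin (sg e * t) = sg e * Real.sin t := by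
  rcases e01 e with h | h <;> subst h <;> simp

lemma exp_neg_coe (t : ℝ) : ((Circle.exp (-t) : ℂ)) = (starRingEnd ℂ) (Circle.exp t : ℂ) := by
  apply Complex.ext
  · rw [exp_re, Real.cos_neg, Complex.conj_re, exp_re]
  · rw [exp_im, Real.sin_neg, Complex.conj_im, exp_im]

lemma exp_pi_neg : Circle.exp (-π) = Circle.exp π := by
  ext
  rw [exp_neg_coe]
  apply Complex.ext <;> simp [exp_re, exp_im]

/-- reconstruction: if `e` matches the sign of the imaginary part -/
lemma recon (z : Circle) (e : ZMod 2) (h1 : ((z : ℂ)).im < 0 → e = 1)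
    (h0 : 0 < ((z : ℂ)).im → e = 0) :
    Circle.exp (sg e * Real.arccos ((z : ℂ)).re) = z := by
  have hre1 := circle_re_le z
  have hre2 := circle_le_re z
  ext
  apply Complex.ext
  · rw [exp_re, cos_sg, Real.cos_arccos hre2 hre1]
  · rw [exp_im, sin_sg, Real.sin_arccos, sqrt_one_sub_sq]
    rcases lt_trichotomy ((z : ℂ)).im 0 with h | h | h
    · rw [h1 h]; simp [abs_of_neg h]
    · simp [h]
    · rw [h0 h]; simp [abs_of_pos h]


section Indices
variable {m : ℕ}

/-- the last index -/
def lastI (m : ℕ) : Fin (m + 2) := ⟨m + 1, by omega⟩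

@[simp] lemma lastI_val : ((lastI m : Fin (m+2)) : ℕ) = m + 1 := rfl

/-- cube index associated to a circle index -/
def ci (i : Fin (m + 2)) : Fin (m + 2) :=
  if h : (i : ℕ) = m + 1 then 0 else ⟨(i : ℕ) + 1, by have := i.2; omega⟩

/-- circle index associated to a cube index -/
def zi (k : Fin (m + 2)) : Fin (m + 2) :=
  if h : (k : ℕ) = 0 then lastI m else ⟨(k : ℕ) - 1, by have := k.2; omega⟩

lemma ci_last : ci (lastI m) = 0 := by simp [ci]

lemma ci_of_ne {i : Fin (m+2)} (h : (i : ℕ) ≠ m + 1) :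
    ci i = ⟨(i : ℕ) + 1, by have := i.2; omega⟩ := by simp [ci, h]

lemma zi_zero : zi (0 : Fin (m + 2)) = lastI m := by simp [zi]

lemma zi_of_ne {k : Fin (m+2)} (h : (k : ℕ) ≠ 0) :
    zi k = ⟨(k : ℕ) - 1, by have := k.2; omega⟩ := by simp [zi, h]

lemma zi_val_ne_last {k : Fin (m+2)} (h : (k : ℕ) ≠ 0) : ((zi k : Fin (m+2)) : ℕ) ≠ m + 1 := by
  rw [zi_of_ne h]; have := k.2; simp; omega

lemma ci_zi (k : Fin (m + 2)) : ci (zi k) = k := by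
  by_cases h : (k : ℕ) = 0
  · rw [show k = 0 from Fin.ext h, zi_zero, ci_last]
  · rw [zi_of_ne h, ci]
    have := k.2
    rw [dif_neg (by simp; omega)]
    exact Fin.ext (by simp; omega)

lemma zi_ci (i : Fin (m + 2)) : zi (ci i) = i := by
  by_cases h : (i : ℕ) = m + 1
  · rw [show i = lastI m from Fin.ext h, ci_last, zi_zero]
  · rw [ci_of_ne h, zi]
    have := i.2
    rw [dif_neg (by simp)]
    exact Fin.ext (by simp)

lemma ci_eq_zero_iff (i : Fin (m+2)) : ci i = 0 ↔ (i : ℕ) = m + 1 := by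
  constructor
  · intro h
    by_contra hne
    rw [ci_of_ne hne] at h
    have := congrArg Fin.val h
    simp at this
  · intro h; rw [show i = lastI m from Fin.ext h, ci_last]

end Indices

section Kmap
variable {m : ℕ}

/-- the Klein involution on the torus -/
def kmap (z : Fin (m + 2) → Circle) : Fin (m + 2) → Circle :=
  fun i => if (i : ℕ) = m + 1 then cneg (z i) else (z i)⁻¹

lemma kmap_im (z : Fin (m+2) → Circle) (i : Fin (m+2)) :
    ((kmap z i : ℂ)).im = -((z i : ℂ)).im := by
  unfold kmap; split_ifs
  · simp
  · rw [Circle.coe_inv_eq_conj]; simp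

lemma kmap_re_last (z : Fin (m+2) → Circle) :
    ((kmap z (lastI m) : ℂ)).re = -((z (lastI m) : ℂ)).re := by
  unfold kmap; rw [if_pos (by simp)]; simp

lemma kmap_re_ne (z : Fin (m+2) → Circle) {i : Fin (m+2)} (h : (i : ℕ) ≠ m + 1) :
    ((kmap z i : ℂ)).re = ((z i : ℂ)).re := by
  unfold kmap; rw [if_neg h, Circle.coe_inv_eq_conj]; simp

lemma kmap_kmap (z : Fin (m+2) → Circle) : kmap (kmap z) = z := by
  funext i; unfold kmap; split_ifs
  · exact cneg_cneg _
  · exact inv_inv _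

lemma continuous_kmap : Continuous (kmap (m := m)) := by
  apply continuous_pi
  intro i
  unfold kmap
  split_ifs
  · exact continuous_cneg.comp (continuous_apply i)
  · exact (continuous_inv (G := Circle)).comp (continuous_apply i)

lemma kleinRel_kmap (z : Fin (m+2) → Circle) : kleinRel (m+2) z (kmap z) := by
  intro i
  unfold kmap
  rw [show m + 2 - 1 = m + 1 from rfl]
  split_ifs
  · simp
  · rw [Circle.coe_inv_eq_conj]

lemma eq_kmap_of_kleinRel {z w : Fin (m+2) → Circle} (h : kleinRel (m+2) z w) : w = kmap z := by
  funext i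
  apply Circle.ext
  rw [h i, show m + 2 - 1 = m + 1 from rfl]
  unfold kmap
  split_ifs
  · simp
  · rw [Circle.coe_inv_eq_conj]

end Kmap

section Span
variable {m : ℕ}

/-- the span of the columns of facets containing `x` -/
def spanS (x : Cube (m + 2)) : Submodule (ZMod 2) (Fin (m + 2) → ZMod 2) :=
  Submodule.span (ZMod 2)
    {v | ∃ j : Fin (2 * (m + 2)), cubeFacetMem (m + 2) x j ∧ v = cubeCol (m + 2) j}

lemma mkeq (p q : (Fin (m+2) → ZMod 2) × Cube (m+2)) (h2 : p.2 = q.2)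
    (h1 : p.1 + q.1 ∈ spanS p.2) :
    Quot.mk (smallCoverRel (m+2)) p = Quot.mk (smallCoverRel (m+2)) q :=
  Quot.sound ⟨h2, h1⟩

lemma mem_single (x : Cube (m+2)) (k : Fin (m+2))
    (h : (x k : ℝ) = -1 ∨ ((x k : ℝ) = 1 ∧ (k : ℕ) ≠ 0)) :
    Pi.single k (1 : ZMod 2) ∈ spanS x := by
  apply Submodule.subset_span
  rcases h with h | ⟨h, hk⟩
  · refine ⟨⟨(k : ℕ), by have := k.2; omega⟩, ?_, ?_⟩
    · unfold cubeFacetMem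
      rw [dif_pos (show (k : ℕ) < m + 2 from k.2)]
      exact h
    · unfold cubeCol
      rw [dif_pos (show (k : ℕ) < m + 2 from k.2)]
  · refine ⟨⟨(m + 2) + (k : ℕ), by have := k.2; omega⟩, ?_, ?_⟩
    · unfold cubeFacetMem
      rw [dif_neg (by simp)]
      rw [show (⟨(m+2) + (k:ℕ) - (m+2), by have := k.2; omega⟩ : Fin (m+2)) = k from
        Fin.ext (by simp)]
      exact h
    · unfold cubeCol
      rw [dif_neg (by simp), if_neg (by show ¬ ((m+2) + (k:ℕ) = m+2); omega)]
      rw [show (⟨(m+2) + (k:ℕ) - (m+2), by have := k.2; omega⟩ : Fin (m+2)) = k from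
        Fin.ext (by simp)]

lemma mem_ones (x : Cube (m+2)) (h : (x 0 : ℝ) = 1) :
    (fun _ => (1 : ZMod 2)) ∈ spanS x := by
  apply Submodule.subset_span
  refine ⟨⟨m + 2, by omega⟩, ?_, ?_⟩
  · unfold cubeFacetMem
    rw [dif_neg (by simp)]
    rw [show (⟨(m+2) - (m+2), by omega⟩ : Fin (m+2)) = 0 from Fin.ext (by simp)]
    exact h
  · unfold cubeCol
    rw [dif_neg (by simp), if_pos (by simp)]

lemma mem_of_cond (x : Cube (m+2)) (d : Fin (m+2) → ZMod 2)
    (h : ∀ k, d k ≠ 0 → ((x k : ℝ) = -1 ∨ ((x k : ℝ) = 1 ∧ (k : ℕ) ≠ 0))) :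
    d ∈ spanS x := by
  rw [← Finset.univ_sum_single d]
  refine Submodule.sum_mem _ (fun k _ => ?_)
  by_cases hk : d k = 0
  · rw [hk, Pi.single_zero]; exact zero_mem _
  · have h1 : d k = 1 := (e01 (d k)).resolve_left hk
    rw [h1]
    exact mem_single x k (h k hk)

end Span

section Forward
variable {m : ℕ}
open Real

/-- sign data of a torus point -/
def fe (z : Fin (m+2) → Circle) : Fin (m+2) → ZMod 2 :=
  fun k => if ((z (zi k) : ℂ)).im < 0 then 1 else 0

/-- cube data of a torus point -/
def fx (z : Fin (m+2) → Circle) : Cube (m+2) := fun k =>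
  ⟨if (k : ℕ) = 0 then min (4 * Real.arccos (((z (zi k) : ℂ)).re) / π - 1) 1
    else ((z (zi k) : ℂ)).re, by
      constructor
      · split_ifs
        · apply le_min
          · have h1 : 0 ≤ Real.arccos (((z (zi k) : ℂ)).re) := Real.arccos_nonneg _
            have h2 : (0:ℝ) < π := Real.pi_pos
            have : 0 ≤ 4 * Real.arccos (((z (zi k) : ℂ)).re) / π := by positivity
            linarith
          · norm_num
        · exact circle_le_re _
      · split_ifs
        · exact min_le_right _ _
        · exact circle_re_le _⟩

lemma fx_val (z : Fin (m+2) → Circle) (k : Fin (m+2)) :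
    ((fx z k : ℝ)) = if (k : ℕ) = 0 then min (4 * Real.arccos (((z (zi k) : ℂ)).re) / π - 1) 1
      else ((z (zi k) : ℂ)).re := rfl

lemma fx_zero_eq (z : Fin (m+2) → Circle) :
    ((fx z 0 : ℝ)) = min (4 * Real.arccos (((z (lastI m) : ℂ)).re) / π - 1) 1 := by
  rw [fx_val, if_pos (show ((0 : Fin (m+2)) : ℕ) = 0 from rfl), zi_zero]

lemma fx_ne_eq (z : Fin (m+2) → Circle) {k : Fin (m+2)} (hk : (k : ℕ) ≠ 0) :
    ((fx z k : ℝ)) = ((z (zi k) : ℂ)).re := by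
  rw [fx_val, if_neg hk]

/-- the forward map, before descending to the quotients -/
def fAux (z : Fin (m+2) → Circle) : SmallCoverCube (m+2) :=
  if 0 ≤ ((z (lastI m) : ℂ)).re then Quot.mk _ (fe z, fx z)
  else Quot.mk _ (fe (kmap z), fx (kmap z))

lemma fAux_pos (z : Fin (m+2) → Circle) (h : 0 ≤ ((z (lastI m) : ℂ)).re) :
    fAux z = Quot.mk _ (fe z, fx z) := if_pos h

lemma fAux_neg (z : Fin (m+2) → Circle) (h : ¬ 0 ≤ ((z (lastI m) : ℂ)).re) :
    fAux z = Quot.mk _ (fe (kmap z), fx (kmap z)) := if_neg h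

lemma re_pm_of {z : Circle} (him : ((z:ℂ)).im = 0) :
    ((z:ℂ)).re = 1 ∨ ((z:ℂ)).re = -1 := by
  have h := circle_sq z
  rw [him] at h
  exact mul_self_eq_one_iff.mp (by nlinarith)

lemma re_eq_one_of {z : Circle} (h0 : 0 ≤ ((z:ℂ)).re) (him : ((z:ℂ)).im = 0) :
    ((z:ℂ)).re = 1 := by
  rcases re_pm_of him with h | h
  · exact h
  · linarith

/-- `x₀ = 1` exactly when the real part of the last coordinate vanishes -/
lemma fx_zero_of_re_zero (z : Fin (m+2) → Circle) (h : ((z (lastI m) : ℂ)).re = 0) :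
    ((fx z 0 : ℝ)) = 1 := by
  rw [fx_zero_eq, h, Real.arccos_zero]
  rw [show 4 * (π/2) / π - 1 = 1 from by field_simp; ring]
  exact min_self 1

/-- key identification when the real part of the last coordinate vanishes -/
lemma e0 (z : Fin (m+2) → Circle) (h : ((z (lastI m) : ℂ)).re = 0) :
    Quot.mk (smallCoverRel (m+2)) (fe z, fx z)
      = Quot.mk (smallCoverRel (m+2)) (fe (kmap z), fx (kmap z)) := by
  have hfx : fx z = fx (kmap z) := by
    funext k
    apply Subtype.ext
    by_cases hk : (k : ℕ) = 0
    · rw [show k = 0 from Fin.ext hk, fx_zero_eq, fx_zero_eq, kmap_re_last, h, neg_zero]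
    · rw [fx_ne_eq z hk, fx_ne_eq (kmap z) hk, kmap_re_ne z (zi_val_ne_last hk)]
  apply mkeq _ _ hfx
  show fe z + fe (kmap z) ∈ spanS (fx z)
  have hdecomp : fe z + fe (kmap z)
      = (fun _ => (1 : ZMod 2)) + (fun k => fe z k + fe (kmap z) k + 1) := by
    funext k
    show fe z k + fe (kmap z) k = 1 + (fe z k + fe (kmap z) k + 1)
    generalize fe z k + fe (kmap z) k = a
    revert a; decide
  rw [hdecomp]
  apply Submodule.add_mem
  · exact mem_ones _ (fx_zero_of_re_zero z h)
  · apply mem_of_cond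
    intro k hk
    have him : ((z (zi k) : ℂ)).im = 0 := by
      by_contra him
      apply hk
      unfold fe
      rw [kmap_im]
      rcases lt_trichotomy (((z (zi k) : ℂ)).im) 0 with h' | h' | h'
      · rw [if_pos h', if_neg (by linarith)]; decide
      · exact absurd h' him
      · rw [if_neg (by linarith), if_pos (by linarith)]; decide
    have hkne : (k : ℕ) ≠ 0 := by
      intro hk0
      rw [show k = 0 from Fin.ext hk0, zi_zero] at him
      have := circle_sq (z (lastI m))
      rw [him, h] at this
      norm_num at this
    rcases re_pm_of him with h' | h'
    · right; exact ⟨by rw [fx_ne_eq z hkne]; exact h', hkne⟩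
    · left; rw [fx_ne_eq z hkne]; exact h'

lemma fAux_kmap (z : Fin (m+2) → Circle) : fAux (kmap z) = fAux z := by
  have hre := kmap_re_last z
  rcases lt_trichotomy (((z (lastI m) : ℂ)).re) 0 with h | h | h
  · rw [fAux_pos (kmap z) (by rw [hre]; linarith), fAux_neg z (by linarith)]
  · rw [fAux_pos (kmap z) (by rw [hre, h]; norm_num), fAux_pos z (by rw [h])]
    exact (e0 z h).symm
  · rw [fAux_neg (kmap z) (by rw [hre]; linarith), fAux_pos z (by linarith), kmap_kmap]

lemma fAux_wd (z w : Fin (m+2) → Circle) (h : kleinRel (m+2) z w) : fAux z = fAux w := by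
  rw [eq_kmap_of_kleinRel h, fAux_kmap]

end Forward

section FCont
variable {m : ℕ}
open Real

/-- constant sign data from a choice of halves -/
def epsOf (t : Fin (m+2) → Bool) : Fin (m+2) → ZMod 2 := fun k => if t k then 0 else 1

/-- `z` or `kmap z` according to a Boolean -/
def wb (b : Bool) (z : Fin (m+2) → Circle) : Fin (m+2) → Circle := if b then z else kmap z

lemma continuous_wb (b : Bool) : Continuous (wb (m := m) b) := by
  cases b
  · exact continuous_kmap
  · exact continuous_id

lemma continuous_re_apply (i : Fin (m+2)) :
    Continuous (fun z : Fin (m+2) → Circle => ((z i : ℂ)).re) :=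
  Complex.continuous_re.comp (ccoe.comp (continuous_apply i))

lemma continuous_im_apply (i : Fin (m+2)) :
    Continuous (fun z : Fin (m+2) → Circle => ((z i : ℂ)).im) :=
  Complex.continuous_im.comp (ccoe.comp (continuous_apply i))

lemma continuous_fx : Continuous (fx (m := m)) := by
  apply continuous_pi
  intro k
  apply Continuous.subtype_mk
  split_ifs with h
  · exact (((Real.continuous_arccos.comp (continuous_re_apply (zi k))).const_smul
      (4:ℝ)).div_const π |>.sub continuous_const).min continuous_const
  · exact continuous_re_apply (zi k)

/-- the closed pieces of the torus -/
def piece (b : Bool) (t : Fin (m+2) → Bool) : Set (Fin (m+2) → Circle) :=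
  {z | if b then 0 ≤ ((z (lastI m) : ℂ)).re else ((z (lastI m) : ℂ)).re ≤ 0} ∩
    ⋂ k, {z | if t k then 0 ≤ (((wb b z) (zi k) : ℂ)).im
      else (((wb b z) (zi k) : ℂ)).im ≤ 0}

lemma isClosed_piece (b : Bool) (t : Fin (m+2) → Bool) : IsClosed (piece b t) := by
  apply IsClosed.inter
  · cases b
    · exact isClosed_le (continuous_re_apply (lastI m)) continuous_const
    · exact isClosed_le continuous_const (continuous_re_apply (lastI m))
  · apply isClosed_iInter
    intro k
    cases ht : t k
    · exact isClosed_le ((continuous_im_apply (zi k)).comp (continuous_wb b)) continuous_const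
    · exact isClosed_le continuous_const ((continuous_im_apply (zi k)).comp (continuous_wb b))

lemma piece_cover : (⋃ p : Bool × (Fin (m+2) → Bool), piece p.1 p.2) = Set.univ := by
  apply Set.eq_univ_of_forall
  intro z
  rw [Set.mem_iUnion]
  by_cases hb : 0 ≤ ((z (lastI m) : ℂ)).re
  · refine ⟨(true, fun k => decide (0 ≤ (((wb true z) (zi k) : ℂ)).im)), hb, ?_⟩
    rw [Set.mem_iInter]
    intro k
    by_cases h : 0 ≤ (((wb true z) (zi k) : ℂ)).im
    · simp [h]
    · simp [h, le_of_not_ge h]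
  · refine ⟨(false, fun k => decide (0 ≤ (((wb false z) (zi k) : ℂ)).im)), le_of_not_ge hb, ?_⟩
    rw [Set.mem_iInter]
    intro k
    by_cases h : 0 ≤ (((wb false z) (zi k) : ℂ)).im
    · simp [h]
    · simp [h, le_of_not_ge h]

lemma e2cond (w : Fin (m+2) → Circle) (h0 : 0 ≤ ((w (lastI m) : ℂ)).re) (k : Fin (m+2))
    (him : ((w (zi k) : ℂ)).im = 0) :
    ((fx w k : ℝ)) = -1 ∨ (((fx w k : ℝ)) = 1 ∧ (k : ℕ) ≠ 0) := by
  by_cases hkz : (k : ℕ) = 0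
  · left
    have hk0 : k = 0 := Fin.ext hkz
    rw [hk0, fx_zero_eq]
    rw [hk0, zi_zero] at him
    rw [re_eq_one_of h0 him, Real.arccos_one]
    rw [show 4 * (0:ℝ) / π - 1 = -1 from by norm_num]
    exact min_eq_left (by norm_num)
  · rcases re_pm_of him with h' | h'
    · right; exact ⟨by rw [fx_ne_eq w hkz]; exact h', hkz⟩
    · left; rw [fx_ne_eq w hkz]; exact h'

/-- on a piece, the forward map agrees with a continuous representative -/
lemma e2 (w : Fin (m+2) → Circle) (t : Fin (m+2) → Bool)
    (h0 : 0 ≤ ((w (lastI m) : ℂ)).re)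
    (ht : ∀ k, if t k then 0 ≤ ((w (zi k) : ℂ)).im else ((w (zi k) : ℂ)).im ≤ 0) :
    Quot.mk (smallCoverRel (m+2)) (fe w, fx w)
      = Quot.mk (smallCoverRel (m+2)) (epsOf t, fx w) := by
  have hmem : fe w + epsOf t ∈ spanS (fx w) := by
    apply mem_of_cond
    intro k hk
    have ht' := ht k
    have him : ((w (zi k) : ℂ)).im = 0 := by
      by_contra him
      apply hk
      show fe w k + epsOf t k = 0
      unfold fe epsOf
      cases htk : t k
      · replace ht' : ((w (zi k) : ℂ)).im ≤ 0 := by rw [htk] at ht'; exact ht'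
        rw [if_pos (lt_of_le_of_ne ht' him)]
        decide
      · replace ht' : 0 ≤ ((w (zi k) : ℂ)).im := by rw [htk] at ht'; exact ht'
        rw [if_neg (not_lt.mpr ht')]
        decide
    exact e2cond w h0 k him
  exact mkeq _ _ rfl hmem

lemma fAux_eq_on_piece (b : Bool) (t : Fin (m+2) → Bool) (z : Fin (m+2) → Circle)
    (hz : z ∈ piece b t) :
    fAux z = Quot.mk (smallCoverRel (m+2)) (epsOf t, fx (wb b z)) := by
  obtain ⟨h1, h2⟩ := hz
  rw [Set.mem_iInter] at h2
  have step1 : fAux z = Quot.mk (smallCoverRel (m+2)) (fe (wb b z), fx (wb b z)) := by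
    cases b
    · replace h1 : ((z (lastI m) : ℂ)).re ≤ 0 := h1
      rcases eq_or_lt_of_le h1 with h | h
      · rw [fAux_pos z (le_of_eq h.symm)]
        exact e0 z h
      · rw [fAux_neg z (by linarith)]
        rfl
    · exact if_pos h1
  rw [step1]
  apply e2
  · cases b
    · replace h1 : ((z (lastI m) : ℂ)).re ≤ 0 := h1
      rw [show wb false z = kmap z from rfl, kmap_re_last]
      linarith
    · exact h1
  · exact h2

lemma continuous_fAux : Continuous (fAux (m := m)) := by
  apply LocallyFinite.continuous
    (f := fun p : Bool × (Fin (m+2) → Bool) => piece p.1 p.2)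
  · exact locallyFinite_of_finite _
  · exact piece_cover
  · exact fun p => isClosed_piece p.1 p.2
  · intro p
    have hc : Continuous (fun z : Fin (m+2) → Circle =>
        Quot.mk (smallCoverRel (m+2)) (epsOf p.2, fx (wb p.1 z))) := by
      apply continuous_quot_mk.comp
      exact (continuous_const.prodMk (continuous_fx.comp (continuous_wb p.1)))
    exact hc.continuousOn.congr (fun z hz => fAux_eq_on_piece p.1 p.2 z hz)

end FCont

section GSide
variable {m : ℕ}
open Real

/-- angle data for the inverse map -/
def ang (x : Cube (m+2)) (i : Fin (m+2)) : ℝ :=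
  if (i : ℕ) = m + 1 then π * ((x 0 : ℝ) + 1) / 4 else Real.arccos ((x (ci i) : ℝ))

lemma ang_nonneg (x : Cube (m+2)) (i : Fin (m+2)) : 0 ≤ ang x i := by
  unfold ang
  split_ifs
  · have h1 := (x 0).2.1
    have h2 := Real.pi_pos
    nlinarith
  · exact Real.arccos_nonneg _

lemma ang_le_pi (x : Cube (m+2)) (i : Fin (m+2)) : ang x i ≤ π := by
  unfold ang
  split_ifs
  · have h1 := (x 0).2.2
    have h2 := Real.pi_pos
    nlinarith
  · exact Real.arccos_le_pi _

lemma ang_last (x : Cube (m+2)) : ang x (lastI m) = π * ((x 0 : ℝ) + 1) / 4 := by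
  unfold ang
  rw [if_pos (by simp)]

lemma ang_last_le (x : Cube (m+2)) : ang x (lastI m) ≤ π / 2 := by
  rw [ang_last]
  have h1 := (x 0).2.2
  have h2 := Real.pi_pos
  nlinarith

/-- the inverse map on representatives -/
def gP (ε : Fin (m+2) → ZMod 2) (x : Cube (m+2)) : Fin (m+2) → Circle :=
  fun i => Circle.exp (sg (ε (ci i)) * ang x i)

/-- the inverse map into the Klein bottle -/
def gAux (p : (Fin (m+2) → ZMod 2) × Cube (m+2)) : Klein (m+2) :=
  Quot.mk (kleinRel (m+2)) (gP p.1 p.2)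

lemma continuous_gAux : Continuous (gAux (m := m)) := by
  have hgp : Continuous (fun p : (Fin (m+2) → ZMod 2) × Cube (m+2) => gP p.1 p.2) := by
    apply continuous_pi
    intro i
    apply (map_continuous Circle.exp).comp
    apply Continuous.mul
    · have h0 : Continuous (fun p : (Fin (m+2) → ZMod 2) × Cube (m+2) => p.1 (ci i)) :=
        (continuous_apply (ci i)).comp continuous_fst
      have hsg : Continuous sg := continuous_of_discreteTopology
      exact hsg.comp h0
    · unfold ang
      split_ifs
      · have h1 : Continuous (fun p : (Fin (m+2) → ZMod 2) × Cube (m+2) => ((p.2 0 : ℝ))) :=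
          (((continuous_apply (0 : Fin (m+2))).comp continuous_snd).subtype_val)
        exact (continuous_const.mul (h1.add continuous_const)).div_const 4
      · have h1 : Continuous (fun p : (Fin (m+2) → ZMod 2) × Cube (m+2) => ((p.2 (ci i) : ℝ))) :=
          (((continuous_apply (ci i)).comp continuous_snd).subtype_val)
        exact Real.continuous_arccos.comp h1
  exact continuous_quot_mk.comp hgp

lemma exp_neg_pi_div_two (e : ZMod 2) :
    (Circle.exp (-(sg e * (π/2))) : ℂ) = -((Circle.exp (sg e * (π/2)) : ℂ)) := by
  rcases e01 e with he | he <;> subst he <;> apply Complex.ext <;>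
    simp only [sg_zero, sg_one, one_mul, neg_one_mul, neg_neg, exp_re, exp_im,
      Complex.neg_re, Complex.neg_im, Real.cos_neg, Real.sin_neg,
      Real.cos_pi_div_two, Real.sin_pi_div_two] <;> norm_num

/-- flipping all signs gives the Klein involution of the image -/
lemma gP_add_ones (ε : Fin (m+2) → ZMod 2) (x : Cube (m+2)) (h : (x 0 : ℝ) = 1) :
    kleinRel (m+2) (gP ε x) (gP (ε + (fun _ => 1 : Fin (m+2) → ZMod 2)) x) := by
  intro i
  rw [show m + 2 - 1 = m + 1 from rfl]
  have hflip : ((ε + (fun _ => 1 : Fin (m+2) → ZMod 2)) (ci i)) = ε (ci i) + 1 := rfl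
  show (Circle.exp (sg ((ε + (fun _ => 1 : Fin (m+2) → ZMod 2)) (ci i)) * ang x i) : ℂ) = _
  rw [hflip, sg_add_one, neg_mul]
  by_cases hi : (i : ℕ) = m + 1
  · rw [if_pos hi]
    have hang : ang x i = π / 2 := by
      rw [show i = lastI m from Fin.ext hi, ang_last, h]; ring
    show (Circle.exp (-(sg (ε (ci i)) * ang x i)) : ℂ) = -(Circle.exp (sg (ε (ci i)) * ang x i) : ℂ)
    rw [hang]
    exact exp_neg_pi_div_two (ε (ci i))
  · rw [if_neg hi]
    show (Circle.exp (-(sg (ε (ci i)) * ang x i)) : ℂ)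
      = (starRingEnd ℂ) (Circle.exp (sg (ε (ci i)) * ang x i) : ℂ)
    exact exp_neg_coe _

/-- effect of adding a basis vector whose angle is `0` or `π` -/
lemma gP_add_single (ε : Fin (m+2) → ZMod 2) (x : Cube (m+2)) (a : Fin (m+2))
    (h : ang x (zi a) = 0 ∨ ang x (zi a) = π) :
    gP ε x = gP (ε + (Pi.single a 1 : Fin (m+2) → ZMod 2)) x := by
  funext i
  unfold gP
  by_cases hia : ci i = a
  · have heq : (ε + (Pi.single a 1 : Fin (m+2) → ZMod 2)) (ci i) = ε (ci i) + 1 := by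
      rw [Pi.add_apply, hia, Pi.single_eq_same]
    rw [heq, sg_add_one]
    have hzi : zi a = i := by rw [← hia, zi_ci]
    rw [hzi] at h
    rcases h with h | h
    · rw [h, mul_zero, mul_zero]
    · rw [h]
      rcases e01 (ε (ci i)) with he | he <;> rw [he]
      · rw [show sg 0 * π = π from by norm_num, show -sg 0 * π = -π from by norm_num]
        exact exp_pi_neg.symm
      · rw [show sg 1 * π = -π from by norm_num, show -sg 1 * π = π from by norm_num]
        exact exp_pi_neg
  · have heq : (ε + (Pi.single a 1 : Fin (m+2) → ZMod 2)) (ci i) = ε (ci i) := by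
      rw [Pi.add_apply, Pi.single_eq_of_ne hia, add_zero]
    rw [heq]

/-- `gAux` respects the small-cover relation -/
lemma gAux_wd (p q : (Fin (m+2) → ZMod 2) × Cube (m+2)) (h : smallCoverRel (m+2) p q) :
    gAux p = gAux q := by
  obtain ⟨ε, x⟩ := p
  obtain ⟨ε', x'⟩ := q
  obtain ⟨h2, hmem⟩ := h
  dsimp at h2 hmem ⊢
  subst h2
  have key : ∀ (v : Fin (m+2) → ZMod 2), v ∈ spanS x →
      ∀ δ : Fin (m+2) → ZMod 2,
        Quot.mk (kleinRel (m+2)) (gP δ x) = Quot.mk (kleinRel (m+2)) (gP (δ + v) x) := by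
    intro v hv
    induction hv using Submodule.span_induction with
    | mem v hv =>
      intro δ
      obtain ⟨j, hmemj, rfl⟩ := hv
      by_cases hj : (j : ℕ) < m + 2
      · have hcol : cubeCol (m+2) j = Pi.single (⟨(j:ℕ), hj⟩ : Fin (m+2)) 1 := by
          unfold cubeCol; rw [dif_pos hj]
        have hfac : (x (⟨(j:ℕ), hj⟩ : Fin (m+2)) : ℝ) = -1 := by
          have := hmemj; unfold cubeFacetMem at this; rwa [dif_pos hj] at this
        rw [hcol]
        refine congrArg _ (gP_add_single δ x _ ?_)
        by_cases hj0 : (j : ℕ) = 0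
        · left
          have : (⟨(j:ℕ), hj⟩ : Fin (m+2)) = 0 := Fin.ext hj0
          rw [this, zi_zero, ang_last]
          rw [this] at hfac
          rw [hfac]; ring
        · right
          have hne : ((zi (⟨(j:ℕ), hj⟩ : Fin (m+2))) : ℕ) ≠ m + 1 := zi_val_ne_last hj0
          unfold ang
          rw [if_neg hne, ci_zi, hfac, Real.arccos_neg_one]
      · by_cases hj2 : (j : ℕ) = m + 2
        · have hcol : cubeCol (m+2) j = fun _ => 1 := by
            unfold cubeCol; rw [dif_neg hj, if_pos hj2]
          have hfac : (x 0 : ℝ) = 1 := by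
            have := hmemj; unfold cubeFacetMem at this; rw [dif_neg hj] at this
            rwa [show (⟨(j:ℕ) - (m+2), by have := j.2; omega⟩ : Fin (m+2)) = 0 from
              Fin.ext (by simp [hj2])] at this
          rw [hcol]
          exact Quot.sound (gP_add_ones δ x hfac)
        · have hb : (j : ℕ) - (m+2) < m + 2 := by have := j.2; omega
          have hcol : cubeCol (m+2) j = Pi.single (⟨(j:ℕ) - (m+2), hb⟩ : Fin (m+2)) 1 := by
            unfold cubeCol; rw [dif_neg hj, if_neg hj2]
          have hfac : (x (⟨(j:ℕ) - (m+2), hb⟩ : Fin (m+2)) : ℝ) = 1 := by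
            have := hmemj; unfold cubeFacetMem at this; rwa [dif_neg hj] at this
          rw [hcol]
          refine congrArg _ (gP_add_single δ x _ ?_)
          left
          have ha0 : ((⟨(j:ℕ) - (m+2), hb⟩ : Fin (m+2)) : ℕ) ≠ 0 := by simp; omega
          have hne := zi_val_ne_last ha0
          unfold ang
          rw [if_neg hne, ci_zi, hfac, Real.arccos_one]
    | zero => intro δ; rw [add_zero]
    | add v w hv hw ihv ihw =>
      intro δ
      rw [ihv δ, ihw (δ + v), add_assoc]
    | smul a v hv ihv =>
      intro δ
      rcases e01 a with ha | ha
      · rw [ha, zero_smul, add_zero]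
      · rw [ha, one_smul]; exact ihv δ
  have hq : ε' = ε + (ε + ε') := by
    funext k
    show ε' k = ε k + (ε k + ε' k)
    generalize ε k = a; generalize ε' k = b
    revert a b; decide
  rw [hq]
  exact key (ε + ε') hmem ε

end GSide

section Inverses
variable {m : ℕ}
open Real

lemma gP_apply (ε : Fin (m+2) → ZMod 2) (x : Cube (m+2)) (i : Fin (m+2)) :
    gP ε x i = Circle.exp (sg (ε (ci i)) * ang x i) := rfl

lemma fe_apply (z : Fin (m+2) → Circle) (k : Fin (m+2)) :
    fe z k = if ((z (zi k) : ℂ)).im < 0 then 1 else 0 := rfl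

lemma ang_zi_ne (x : Cube (m+2)) {k : Fin (m+2)} (hk : (k : ℕ) ≠ 0) :
    ang x (zi k) = Real.arccos ((x k : ℝ)) := by
  unfold ang
  rw [if_neg (zi_val_ne_last hk), ci_zi]

/-- reconstruction of a torus point from its forward data -/
lemma gP_fe_fx (z : Fin (m+2) → Circle) (h0 : 0 ≤ ((z (lastI m) : ℂ)).re) :
    gP (fe z) (fx z) = z := by
  funext i
  rw [gP_apply]
  by_cases hi : (i : ℕ) = m + 1
  · have hieq : i = lastI m := Fin.ext hi
    subst hieq
    rw [ci_last, ang_last, fe_apply, zi_zero]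
    have hA : Real.arccos (((z (lastI m) : ℂ)).re) ≤ π / 2 :=
      Real.arccos_le_pi_div_two.mpr h0
    have hx0 : ((fx z 0 : ℝ)) = 4 * Real.arccos (((z (lastI m) : ℂ)).re) / π - 1 := by
      rw [fx_zero_eq]
      apply min_eq_left
      have hpi := Real.pi_pos
      have h2 : 4 * Real.arccos (((z (lastI m) : ℂ)).re) / π ≤ 2 := by
        rw [div_le_iff₀ hpi]
        nlinarith
      linarith
    rw [hx0]
    have hpi := Real.pi_ne_zero
    rw [show π * (4 * Real.arccos (((z (lastI m) : ℂ)).re) / π - 1 + 1) / 4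
        = Real.arccos (((z (lastI m) : ℂ)).re) from by field_simp; ring]
    exact recon _ _ (fun h => if_pos h) (fun h => if_neg (not_lt.mpr (le_of_lt h)))
  · have hci : ((ci i : Fin (m+2)) : ℕ) ≠ 0 := by
      rw [ci_of_ne hi]; simp
    have hang : ang (fx z) i = Real.arccos (((z i : ℂ)).re) := by
      unfold ang
      rw [if_neg hi, fx_ne_eq z hci, zi_ci]
    have hfe : fe z (ci i) = if ((z i : ℂ)).im < 0 then 1 else 0 := by
      rw [fe_apply, zi_ci]
    rw [hang, hfe]
    exact recon _ _ (fun h => if_pos h) (fun h => if_neg (not_lt.mpr (le_of_lt h)))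


lemma ang_zi_zero (x : Cube (m+2)) : ang x (zi (0 : Fin (m+2))) = π * ((x 0 : ℝ) + 1) / 4 := by
  rw [zi_zero, ang_last]

/-- the cube data of `gP ε x` is `x` -/
lemma fx_gP (ε : Fin (m+2) → ZMod 2) (x : Cube (m+2)) : fx (gP ε x) = x := by
  funext k
  apply Subtype.ext
  by_cases hk : (k : ℕ) = 0
  · have hk0 : k = 0 := Fin.ext hk
    subst hk0
    rw [fx_zero_eq]
    have hre : ((gP ε x (lastI m) : ℂ)).re = Real.cos (ang x (lastI m)) := by
      rw [gP_apply, exp_re, cos_sg]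
    have hb1 : 0 ≤ ang x (lastI m) := ang_nonneg x _
    have hb2 : ang x (lastI m) ≤ π := ang_le_pi x _
    rw [hre, Real.arccos_cos hb1 hb2, ang_last]
    have hpi := Real.pi_ne_zero
    rw [show 4 * (π * ((x 0 : ℝ) + 1) / 4) / π - 1 = (x 0 : ℝ) from by field_simp; ring]
    exact min_eq_left (x 0).2.2
  · rw [fx_ne_eq _ hk, gP_apply, exp_re, cos_sg, ang_zi_ne x hk,
      Real.cos_arccos (x k).2.1 (x k).2.2]

/-- the sign data of `gP ε x` differs from `ε` only on facets -/
lemma fe_gP_mem (ε : Fin (m+2) → ZMod 2) (x : Cube (m+2)) :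
    fe (gP ε x) + ε ∈ spanS (fx (gP ε x)) := by
  rw [fx_gP]
  apply mem_of_cond
  intro k hk
  have him : ((gP ε x (zi k) : ℂ)).im = sg (ε k) * Real.sin (ang x (zi k)) := by
    rw [gP_apply, exp_im, ci_zi, sin_sg]
  have hb1 : 0 ≤ ang x (zi k) := ang_nonneg x _
  have hb2 : ang x (zi k) ≤ π := ang_le_pi x _
  by_cases hsz : Real.sin (ang x (zi k)) = 0
  · have hfe : fe (gP ε x) k = 0 := by
      rw [fe_apply, him, hsz, mul_zero, if_neg (lt_irrefl _)]
    by_cases hk0 : (k : ℕ) = 0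
    · left
      have hk0' : k = 0 := Fin.ext hk0
      subst hk0'
      rw [ang_zi_zero] at hsz hb1
      have hlt : π * ((x 0 : ℝ) + 1) / 4 < π := by
        have h1 := (x 0).2.2
        have hpi := Real.pi_pos
        nlinarith
      have h0' : π * ((x 0 : ℝ) + 1) / 4 = 0 :=
        (Real.sin_eq_zero_iff_of_lt_of_lt (by linarith [Real.pi_pos]) hlt).mp hsz
      have hpi := Real.pi_ne_zero
      have : (x 0 : ℝ) + 1 = 0 := by
        rcases mul_eq_zero.mp (by linarith : π * ((x 0 : ℝ) + 1) = 0) with h | h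
        · exact absurd h hpi
        · exact h
      linarith
    · rw [ang_zi_ne x hk0, Real.sin_arccos] at hsz
      have h1 := (x k).2.1
      have h2 := (x k).2.2
      have h5 : 1 - ((x k : ℝ))^2 ≤ 0 := Real.sqrt_eq_zero'.mp hsz
      have hsq : ((x k : ℝ))^2 = 1 := le_antisymm (by nlinarith) (by linarith)
      have h7 : ((x k : ℝ)) * ((x k : ℝ)) = 1 := by rw [← pow_two]; exact hsq
      rcases mul_self_eq_one_iff.mp h7 with h | h
      · right; exact ⟨h, hk0⟩
      · left; exact h
  · have hspos : 0 < Real.sin (ang x (zi k)) :=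
      lt_of_le_of_ne (Real.sin_nonneg_of_nonneg_of_le_pi hb1 hb2) (Ne.symm hsz)
    exfalso
    apply hk
    show fe (gP ε x) k + ε k = 0
    rcases e01 (ε k) with he | he <;> rw [he] <;> rw [he] at him
    · rw [fe_apply, him, if_neg (by rw [sg_zero]; nlinarith)]
      decide
    · rw [fe_apply, him, if_pos (by rw [sg_one]; nlinarith)]
      decide

/-- the real part of the last coordinate of `gP ε x` is nonnegative -/
lemma gP_last_re_nonneg (ε : Fin (m+2) → ZMod 2) (x : Cube (m+2)) :
    0 ≤ ((gP ε x (lastI m) : ℂ)).re := by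
  rw [gP_apply, exp_re, cos_sg]
  apply Real.cos_nonneg_of_mem_Icc
  constructor
  · linarith [ang_nonneg x (lastI m), Real.pi_pos]
  · exact ang_last_le x

/-- the two quotient maps -/
def fKS : Klein (m+2) → SmallCoverCube (m+2) := Quot.lift fAux fAux_wd
def gKS : SmallCoverCube (m+2) → Klein (m+2) := Quot.lift gAux gAux_wd

lemma left_inverse : ∀ a : Klein (m+2), gKS (fKS a) = a := by
  apply Quot.ind
  intro z
  show gKS (fAux z) = Quot.mk _ z
  by_cases h0 : 0 ≤ ((z (lastI m) : ℂ)).re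
  · rw [fAux_pos z h0]
    show Quot.mk _ (gP (fe z) (fx z)) = _
    rw [gP_fe_fx z h0]
  · rw [fAux_neg z h0]
    show Quot.mk _ (gP (fe (kmap z)) (fx (kmap z))) = _
    rw [gP_fe_fx (kmap z) (by rw [kmap_re_last]; linarith [lt_of_not_ge h0])]
    exact (Quot.sound (kleinRel_kmap z)).symm

lemma right_inverse : ∀ b : SmallCoverCube (m+2), fKS (gKS b) = b := by
  apply Quot.ind
  intro p
  obtain ⟨ε, x⟩ := p
  show fAux (gP ε x) = Quot.mk _ (ε, x)
  rw [fAux_pos _ (gP_last_re_nonneg ε x)]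
  exact mkeq _ _ (fx_gP ε x) (fe_gP_mem ε x)

lemma continuous_fKS : Continuous (fKS (m := m)) :=
  continuous_quot_lift _ continuous_fAux

lemma continuous_gKS : Continuous (gKS (m := m)) :=
  continuous_quot_lift _ continuous_gAux

end Inverses
end
end KleinSC

/-- For `n ≥ 2`, the `n`-dimensional Klein bottle `K_n` is homeomorphic to
the small cover `X(Iⁿ, χ)`. -/
theorem klein_homeomorph_smallCover (n : ℕ) (hn : 2 ≤ n) :
    Nonempty (Klein n ≃ₜ SmallCoverCube n) := by
  obtain ⟨m, rfl⟩ : ∃ m, n = m + 2 := ⟨n - 2, by omega⟩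
  exact ⟨{
    toFun := KleinSC.fKS
    invFun := KleinSC.gKS
    left_inv := KleinSC.left_inverse
    right_inv := KleinSC.right_inverse
    continuous_toFun := KleinSC.continuous_fKS
    continuous_invFun := KleinSC.continuous_gKS }⟩
end

section
/- Let n ≥ 2 and T ⊆ {1,…,n}. Then |supp(χ_T)| = 2|T| if |T| is even and 1 ∉ T; |supp(χ_T)| = 2|T| − 1 if |T| is even and 1 ∈ T; |supp(χ_T)| = 2|T| if |T| is odd and 1 ∈ T; and |supp(χ_T)| = 2|T| + 1 if |T| is odd and 1 ∉ T. -/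
/-- The `(i,j)` entry of the characteristic matrix `χ` of the `n`-Klein bottle (rows and
columns indexed from `1`): row `1` has `1`'s exactly at positions `1` and `n+1`, and for
`2 ≤ i ≤ n` row `i` has `1`'s exactly at positions `i`, `n+1` and `n+i`. -/
def chiEntry (n i j : ℕ) : ZMod 2 :=
  if j = i ∨ j = n + 1 ∨ j = n + i then 1 else 0

/-- The support of `χ_T = ∑_{i∈T} (row i of χ)`, as a subset of `{1,…,2n}`. -/
def chiSupp (n : ℕ) (T : Finset ℕ) : Finset ℕ :=
  (Finset.Icc 1 (2 * n)).filter (fun j => (∑ i ∈ T, chiEntry n i j) ≠ 0)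

/-- For `n ≥ 2` and `T ⊆ {1,…,n}`:
`|supp(χ_T)| = 2|T|` if `|T|` is even and `1 ∉ T`; `2|T| − 1` if `|T|` is even and `1 ∈ T`;
`2|T|` if `|T|` is odd and `1 ∈ T`; and `2|T| + 1` if `|T|` is odd and `1 ∉ T`. -/
theorem card_chiSupp (n : ℕ) (hn : 2 ≤ n) (T : Finset ℕ) (hT : T ⊆ Finset.Icc 1 n) :
    (chiSupp n T).card =
      if Even T.card then (if 1 ∈ T then 2 * T.card - 1 else 2 * T.card)
      else (if 1 ∈ T then 2 * T.card else 2 * T.card + 1) := by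
  classical
  have hmemT : ∀ i ∈ T, 1 ≤ i ∧ i ≤ n := fun i hi => Finset.mem_Icc.mp (hT hi)
  have hne : ∀ j, (∑ i ∈ T, chiEntry n i j) ≠ 0 ↔
      Odd (T.filter (fun i => j = i ∨ j = n + 1 ∨ j = n + i)).card := by
    intro j
    have : (∑ i ∈ T, chiEntry n i j) =
        ((T.filter (fun i => j = i ∨ j = n + 1 ∨ j = n + i)).card : ZMod 2) := by
      simp [chiEntry, Finset.sum_boole]
    rw [this, Ne, ZMod.natCast_eq_zero_iff, Nat.odd_iff, Nat.two_dvd_ne_zero]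
  have key : chiSupp n T =
      (T ∪ (T.erase 1).image (fun i => n + i)) ∪
        (if Odd T.card then {n + 1} else ∅) := by
    ext j
    simp only [chiSupp, Finset.mem_filter, hne, Finset.mem_Icc, Finset.mem_union,
      Finset.mem_image, Finset.mem_erase]
    constructor
    · rintro ⟨⟨hj1, hj2⟩, hodd⟩
      by_cases h1 : j ≤ n
      · -- filter reduces to {i ∈ T | j = i}
        left; left
        have : T.filter (fun i => j = i ∨ j = n + 1 ∨ j = n + i) =
            T.filter (fun i => j = i) := by
          apply Finset.filter_congr
          intro i hi
          have := hmemT i hi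
          constructor
          · rintro (h | h | h) <;> omega
          · tauto
        rw [this] at hodd
        by_cases hjT : j ∈ T
        · exact hjT
        · exfalso
          have : T.filter (fun i => j = i) = ∅ := by
            apply Finset.filter_false_of_mem
            intro i hi hji; exact hjT (hji ▸ hi)
          rw [this] at hodd; simp at hodd
      · by_cases h2 : j = n + 1
        · subst h2
          have : T.filter (fun i => n + 1 = i ∨ n + 1 = n + 1 ∨ n + 1 = n + i) = T := by
            apply Finset.filter_true_of_mem; intro i hi; tauto
          rw [this] at hodd
          right; simp [hodd]
        · -- j ≥ n + 2
          left; right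
          have hj3 : n + 2 ≤ j := by omega
          have : T.filter (fun i => j = i ∨ j = n + 1 ∨ j = n + i) =
              T.filter (fun i => i = j - n) := by
            apply Finset.filter_congr
            intro i hi
            have := hmemT i hi
            omega
          rw [this, Finset.filter_eq'] at hodd
          by_cases hjT : j - n ∈ T
          · refine ⟨j - n, ⟨?_, hjT⟩, ?_⟩ <;> omega
          · simp [hjT] at hodd
    · rintro (hj | hodd)
      · rcases hj with hjT | ⟨i, ⟨hi1, hiT⟩, rfl⟩
        · have := hmemT j hjT
          refine ⟨⟨by omega, by omega⟩, ?_⟩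
          have : T.filter (fun i => j = i ∨ j = n + 1 ∨ j = n + i) =
              T.filter (fun i => j = i) := by
            apply Finset.filter_congr
            intro i hi
            have := hmemT i hi
            constructor
            · rintro (h | h | h) <;> omega
            · tauto
          rw [this, Finset.filter_eq, if_pos hjT]
          simp
        · have := hmemT i hiT
          refine ⟨⟨by omega, by omega⟩, ?_⟩
          have heq : T.filter (fun i' => n + i = i' ∨ n + i = n + 1 ∨ n + i = n + i') =
              T.filter (fun i' => i' = i) := by
            apply Finset.filter_congr
            intro i' hi'
            have := hmemT i' hi'
            omega
          rw [heq, Finset.filter_eq', if_pos hiT]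
          simp
      · split_ifs at hodd with ho
        · simp only [Finset.mem_singleton] at hodd
          subst hodd
          refine ⟨⟨by omega, by omega⟩, ?_⟩
          have : T.filter (fun i => n + 1 = i ∨ n + 1 = n + 1 ∨ n + 1 = n + i) = T := by
            apply Finset.filter_true_of_mem; intro i hi; tauto
          rw [this]; exact ho
        · simp at hodd
  rw [key]
  have hd1 : Disjoint T ((T.erase 1).image (fun i => n + i)) := by
    rw [Finset.disjoint_left]
    rintro a haT ha
    simp only [Finset.mem_image, Finset.mem_erase] at ha
    obtain ⟨i, ⟨_, hiT⟩, rfl⟩ := ha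
    have := hmemT _ haT
    have := hmemT i hiT
    omega
  have hd2 : Disjoint (T ∪ (T.erase 1).image (fun i => n + i))
      (if Odd T.card then ({n + 1} : Finset ℕ) else ∅) := by
    split_ifs
    · rw [Finset.disjoint_right]
      intro a ha
      simp only [Finset.mem_singleton] at ha
      subst ha
      simp only [Finset.mem_union, Finset.mem_image, Finset.mem_erase]
      rintro (h | ⟨i, ⟨hi1, hiT⟩, hi⟩)
      · have := hmemT _ h; omega
      · have := hmemT i hiT; omega
    · simp
  rw [Finset.card_union_of_disjoint hd2, Finset.card_union_of_disjoint hd1,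
    Finset.card_image_of_injective _ (fun a b => by omega)]
  have hcard1 : 1 ∈ T → 1 ≤ T.card := fun h => Finset.card_pos.mpr ⟨1, h⟩
  by_cases h1 : 1 ∈ T
  · have hc : 1 ≤ T.card := Finset.card_pos.mpr ⟨1, h1⟩
    rw [Finset.card_erase_of_mem h1]
    by_cases he : Even T.card
    · rw [if_pos he, if_pos h1, if_neg (by simpa [Nat.not_odd_iff_even] using he)]
      simp only [Finset.card_empty, Finset.card_singleton]
      omega
    · rw [if_neg he, if_pos h1, if_pos (Nat.not_even_iff_odd.mp he)]
      simp only [Finset.card_empty, Finset.card_singleton]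
      omega
  · rw [Finset.erase_eq_of_notMem h1]
    by_cases he : Even T.card
    · rw [if_pos he, if_neg h1, if_neg (by simpa [Nat.not_odd_iff_even] using he)]
      simp only [Finset.card_empty, Finset.card_singleton]
      omega
    · rw [if_neg he, if_neg h1, if_pos (Nat.not_even_iff_odd.mp he)]
      simp only [Finset.card_empty, Finset.card_singleton]
      omega
end

section
/- Let n ≥ 2 and let T ⊆ {1,…,n} be nonempty. If |supp(χ_T)| is even (i.e., |T| is even and 1 ∉ T, or |T| is odd and 1 ∈ T), then the geometric realization of the induced subcomplex K_{χ,T} is homotopy equivalent to the sphere S^{|T|−1} (indeed K_{χ,T} is isomorphic to the boundary complex of the |T|-dimensional cross polytope). If |supp(χ_T)| is odd, then the geometric realization of K_{χ,T} is contractible. -/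
/-- Faces of the boundary complex `K` of the `n`-dimensional cross polytope on the vertex
set `{1,…,2n}`: the subsets containing no antipodal pair `{i, n+i}` (`1 ≤ i ≤ n`). -/
def crossFace (n : ℕ) (t : Finset ℕ) : Prop :=
  t ⊆ Finset.Icc 1 (2 * n) ∧ ∀ i ∈ Finset.Icc 1 n, ¬(i ∈ t ∧ n + i ∈ t)

/-- The geometric realization of an abstract simplicial complex with vertices among
`{0,…,m−1}`, whose faces are given by the predicate `K`: the space of convex weight
functions whose support is a face of `K`. -/
abbrev GeomReal (m : ℕ) (K : Finset ℕ → Prop) : Type :=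
  {f : Fin m → ℝ // (∀ v, 0 ≤ f v) ∧ (∑ v, f v = 1) ∧
    K ((Finset.univ.filter (fun v => f v ≠ 0)).image Fin.val)}

namespace KleinAux

lemma mem_chiSupp {n : ℕ} {T : Finset ℕ} (hT : T ⊆ Finset.Icc 1 n) (j : ℕ) :
    j ∈ chiSupp n T ↔
      (j ∈ T ∨ (∃ i ∈ T, 2 ≤ i ∧ j = n + i) ∨ (j = n + 1 ∧ ¬ Even T.card)) := by
  have hTb : ∀ i ∈ T, 1 ≤ i ∧ i ≤ n := fun i hi => by
    simpa using Finset.mem_Icc.mp (hT hi)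
  simp only [chiSupp, Finset.mem_filter, Finset.mem_Icc]
  constructor
  · rintro ⟨⟨hj1, hj2⟩, hsum⟩
    by_cases hle : j ≤ n
    · left
      have : (∑ i ∈ T, chiEntry n i j) = ∑ i ∈ T, (if j = i then (1 : ZMod 2) else 0) := by
        apply Finset.sum_congr rfl
        intro i hi
        obtain ⟨h1, h2⟩ := hTb i hi
        unfold chiEntry
        congr 1
        simp only [eq_iff_iff]
        constructor
        · rintro (h | h | h) <;> omega
        · intro h; exact Or.inl h
      rw [this, Finset.sum_ite_eq T j (fun _ => (1 : ZMod 2))] at hsum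
      by_contra hjT
      simp [hjT] at hsum
    · by_cases hj : j = n + 1
      · right; right
        refine ⟨hj, ?_⟩
        have : (∑ i ∈ T, chiEntry n i j) = ∑ i ∈ T, (1 : ZMod 2) := by
          apply Finset.sum_congr rfl
          intro i hi
          unfold chiEntry
          rw [if_pos (Or.inr (Or.inl hj))]
        rw [this, Finset.sum_const, nsmul_eq_mul, mul_one] at hsum
        intro hev
        exact hsum ((ZMod.natCast_eq_zero_iff _ 2).mpr hev.two_dvd)
      · right; left
        have hd : n + 2 ≤ j := by omega
        have : (∑ i ∈ T, chiEntry n i j) = ∑ i ∈ T, (if j - n = i then (1 : ZMod 2) else 0) := by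
          apply Finset.sum_congr rfl
          intro i hi
          obtain ⟨h1, h2⟩ := hTb i hi
          unfold chiEntry
          congr 1
          simp only [eq_iff_iff]
          omega
        rw [this, Finset.sum_ite_eq T (j - n) (fun _ => (1 : ZMod 2))] at hsum
        by_cases hjT : j - n ∈ T
        · exact ⟨j - n, hjT, by omega, by omega⟩
        · simp [hjT] at hsum
  · rintro (hjT | ⟨i, hi, h2i, rfl⟩ | ⟨rfl, hodd⟩)
    · obtain ⟨h1, h2⟩ := hTb j hjT
      refine ⟨⟨by omega, by omega⟩, ?_⟩
      have : (∑ i ∈ T, chiEntry n i j) = ∑ i ∈ T, (if j = i then (1 : ZMod 2) else 0) := by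
        apply Finset.sum_congr rfl
        intro i hi
        obtain ⟨k1, k2⟩ := hTb i hi
        unfold chiEntry
        congr 1
        simp only [eq_iff_iff]
        constructor
        · rintro (h | h | h) <;> omega
        · intro h; exact Or.inl h
      rw [this, Finset.sum_ite_eq T j (fun _ => (1 : ZMod 2)), if_pos hjT]
      exact one_ne_zero
    · obtain ⟨h1, h2⟩ := hTb i hi
      refine ⟨⟨by omega, by omega⟩, ?_⟩
      have : (∑ i' ∈ T, chiEntry n i' (n + i)) = ∑ i' ∈ T, (if (n + i) - n = i' then (1 : ZMod 2) else 0) := by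
        apply Finset.sum_congr rfl
        intro i' hi'
        obtain ⟨k1, k2⟩ := hTb i' hi'
        unfold chiEntry
        congr 1
        simp only [eq_iff_iff]
        omega
      rw [this, Finset.sum_ite_eq T (n + i - n) (fun _ => (1 : ZMod 2)),
        if_pos (by simpa using hi)]
      exact one_ne_zero
    · have hn1 : 1 ≤ n := by
        obtain ⟨i, hi⟩ := Finset.card_pos.mp (Nat.pos_of_ne_zero (fun h => hodd (h ▸ Even.zero)))
        exact le_trans (hTb i hi).1 (hTb i hi).2
      refine ⟨⟨by omega, by omega⟩, ?_⟩
      have : (∑ i ∈ T, chiEntry n i (n + 1)) = ∑ i ∈ T, (1 : ZMod 2) := by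
        apply Finset.sum_congr rfl
        intro i hi
        unfold chiEntry
        rw [if_pos (Or.inr (Or.inl rfl))]
      rw [this, Finset.sum_const, nsmul_eq_mul, mul_one]
      intro h0
      exact hodd (even_iff_two_dvd.mpr ((ZMod.natCast_eq_zero_iff _ 2).mp h0))

section
variable {n : ℕ} {T : Finset ℕ}

lemma Tbounds (hT : T ⊆ Finset.Icc 1 n) : ∀ i ∈ T, 1 ≤ i ∧ i ≤ n := fun i hi => by
  simpa using Finset.mem_Icc.mp (hT hi)

lemma mem_union_iff (hT : T ⊆ Finset.Icc 1 n) (j : ℕ) :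
    j ∈ T ∪ T.image (n + ·) ↔ (j ∈ T ∨ ∃ i ∈ T, j = n + i) := by
  simp only [Finset.mem_union, Finset.mem_image]
  constructor
  · rintro (h | ⟨i, hi, rfl⟩)
    · exact Or.inl h
    · exact Or.inr ⟨i, hi, rfl⟩
  · rintro (h | ⟨i, hi, rfl⟩)
    · exact Or.inl h
    · exact Or.inr ⟨i, hi, rfl⟩

lemma card_union (hT : T ⊆ Finset.Icc 1 n) :
    (T ∪ T.image (n + ·)).card = 2 * T.card := by
  have hinj : Set.InjOn (n + ·) T := fun a _ b _ h => by simp only [] at h; omega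
  have hdisj : Disjoint T (T.image (n + ·)) := by
    rw [Finset.disjoint_left]
    rintro a ha hb
    obtain ⟨i, hi, rfl⟩ := Finset.mem_image.mp hb
    have := Tbounds hT _ ha
    have := Tbounds hT _ hi
    omega
  rw [Finset.card_union_of_disjoint hdisj, Finset.card_image_of_injOn hinj]
  omega

lemma chiSupp_matched (hT : T ⊆ Finset.Icc 1 n) (hpar : 1 ∈ T ↔ ¬ Even T.card) :
    chiSupp n T = T ∪ T.image (n + ·) := by
  ext j
  rw [mem_chiSupp hT, mem_union_iff hT]
  constructor
  · rintro (h | ⟨i, hi, _, rfl⟩ | ⟨rfl, hodd⟩)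
    · exact Or.inl h
    · exact Or.inr ⟨i, hi, rfl⟩
    · exact Or.inr ⟨1, hpar.mpr hodd, rfl⟩
  · rintro (h | ⟨i, hi, rfl⟩)
    · exact Or.inl h
    · rcases Nat.lt_or_ge i 2 with h2 | h2
      · have h1 := (Tbounds hT _ hi).1
        have : i = 1 := by omega
        subst this
        exact Or.inr (Or.inr ⟨rfl, hpar.mp hi⟩)
      · exact Or.inr (Or.inl ⟨i, hi, h2, rfl⟩)

lemma chiSupp_caseA (hT : T ⊆ Finset.Icc 1 n) (h1 : 1 ∈ T) (hev : Even T.card) :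
    chiSupp n T = (T ∪ T.image (n + ·)).erase (n + 1) := by
  ext j
  rw [mem_chiSupp hT, Finset.mem_erase, mem_union_iff hT]
  have hb := Tbounds hT
  constructor
  · rintro (h | ⟨i, hi, h2, rfl⟩ | ⟨rfl, hodd⟩)
    · have := hb _ h
      exact ⟨by omega, Or.inl h⟩
    · have := hb _ hi
      exact ⟨by omega, Or.inr ⟨i, hi, rfl⟩⟩
    · exact absurd hev hodd
  · rintro ⟨hne, h | ⟨i, hi, rfl⟩⟩
    · exact Or.inl h
    · have := hb _ hi
      exact Or.inr (Or.inl ⟨i, hi, by omega, rfl⟩)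

lemma chiSupp_caseB (hT : T ⊆ Finset.Icc 1 n) (h1 : 1 ∉ T) (hodd : ¬ Even T.card) :
    chiSupp n T = insert (n + 1) (T ∪ T.image (n + ·)) := by
  ext j
  rw [mem_chiSupp hT, Finset.mem_insert, mem_union_iff hT]
  have hb := Tbounds hT
  constructor
  · rintro (h | ⟨i, hi, h2, rfl⟩ | ⟨rfl, _⟩)
    · exact Or.inr (Or.inl h)
    · exact Or.inr (Or.inr ⟨i, hi, rfl⟩)
    · exact Or.inl rfl
  · rintro (rfl | h | ⟨i, hi, rfl⟩)
    · exact Or.inr (Or.inr ⟨rfl, hodd⟩)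
    · exact Or.inl h
    · have := hb _ hi
      have h2 : 2 ≤ i := by
        rcases Nat.lt_or_ge i 2 with h' | h'
        · exfalso; apply h1; have : i = 1 := by omega
          rwa [this] at hi
        · exact h'
      exact Or.inr (Or.inl ⟨i, hi, h2, rfl⟩)

lemma card_chiSupp_caseA (hT : T ⊆ Finset.Icc 1 n) (h1 : 1 ∈ T) (hev : Even T.card) :
    (chiSupp n T).card = 2 * T.card - 1 := by
  rw [chiSupp_caseA hT h1 hev, Finset.card_erase_of_mem
    (by rw [mem_union_iff hT]; exact Or.inr ⟨1, h1, rfl⟩), card_union hT]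

lemma card_chiSupp_caseB (hT : T ⊆ Finset.Icc 1 n) (h1 : 1 ∉ T) (hodd : ¬ Even T.card) :
    (chiSupp n T).card = 2 * T.card + 1 := by
  rw [chiSupp_caseB hT h1 hodd, Finset.card_insert_of_notMem, card_union hT]
  rw [mem_union_iff hT]
  have hb := Tbounds hT
  rintro (h | ⟨i, hi, hii⟩)
  · have := hb _ h; omega
  · have := hb _ hi
    have : i = 1 := by omega
    exact h1 (this ▸ hi)

end

lemma geomReal_contractible (m : ℕ) (K : Finset ℕ → Prop) (c : Fin m)
    (hins : ∀ t : Finset ℕ, K t → K (insert c.val t)) (hsing : K {c.val}) :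
    ContractibleSpace (GeomReal m K) := by
  -- the cone point
  have hdelta : (∀ v, (0:ℝ) ≤ if v = c then 1 else 0) ∧
      ((∑ v : Fin m, if v = c then (1:ℝ) else 0) = 1) ∧
      K ((Finset.univ.filter (fun v => (if v = c then (1:ℝ) else 0) ≠ 0)).image Fin.val) := by
    refine ⟨fun v => by positivity, by simp, ?_⟩
    have : (Finset.univ.filter (fun v => (if v = c then (1:ℝ) else 0) ≠ 0)) = {c} := by
      ext v
      by_cases h : v = c <;> simp [h]
    rw [this]
    simpa using hsing
  set p : GeomReal m K := ⟨fun v => if v = c then 1 else 0, hdelta⟩ with hp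
  rw [contractible_iff_id_nullhomotopic]
  refine ⟨p, ?_⟩
  -- the homotopy
  have key : ∀ (t : unitInterval) (x : GeomReal m K),
      (∀ v, (0:ℝ) ≤ (1 - t.1) * x.1 v + t.1 * (if v = c then 1 else 0)) ∧
      ((∑ v : Fin m, ((1 - t.1) * x.1 v + t.1 * (if v = c then 1 else 0))) = 1) ∧
      K ((Finset.univ.filter
        (fun v => ((1 - t.1) * x.1 v + t.1 * (if v = c then 1 else 0)) ≠ 0)).image Fin.val) := by
    intro t x
    obtain ⟨hpos, hsum, hK⟩ := x.2
    have ht0 := t.2.1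
    have ht1 := t.2.2
    refine ⟨?_, ?_, ?_⟩
    · intro v
      have hx := hpos v
      have hi : (0:ℝ) ≤ if v = c then (1:ℝ) else 0 := by positivity
      exact add_nonneg (mul_nonneg (by linarith) hx) (mul_nonneg ht0 hi)
    · rw [Finset.sum_add_distrib, ← Finset.mul_sum, ← Finset.mul_sum, hsum]
      simp
    · by_cases h1 : t.1 = 1
      · have : (Finset.univ.filter
            (fun v => ((1 - t.1) * x.1 v + t.1 * (if v = c then 1 else 0)) ≠ 0)) = {c} := by
          ext v
          by_cases h : v = c <;> simp [h, h1]
        rw [this]; simpa using hsing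
      · by_cases h0 : t.1 = 0
        · have : (Finset.univ.filter
              (fun v => ((1 - t.1) * x.1 v + t.1 * (if v = c then 1 else 0)) ≠ 0)) =
              (Finset.univ.filter (fun v => x.1 v ≠ 0)) := by
            ext v; simp [h0]
          rw [this]; exact hK
        · have h0' : 0 < t.1 := lt_of_le_of_ne ht0 (Ne.symm h0)
          have h1' : t.1 < 1 := lt_of_le_of_ne ht1 h1
          have : (Finset.univ.filter
              (fun v => ((1 - t.1) * x.1 v + t.1 * (if v = c then 1 else 0)) ≠ 0)) =
              insert c (Finset.univ.filter (fun v => x.1 v ≠ 0)) := by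
            ext v
            simp only [Finset.mem_filter, Finset.mem_insert, Finset.mem_univ, true_and]
            constructor
            · intro hv
              by_cases h : v = c
              · exact Or.inl h
              · right
                intro hx0
                apply hv
                simp [h, hx0]
            · intro hv
              have hnn : 0 ≤ (1 - t.1) * x.1 v := by
                have := hpos v
                nlinarith
              rcases hv with rfl | hv
              · have h4 : t.1 * (if v = v then (1:ℝ) else 0) = t.1 := by simp
                rw [h4]
                intro hcon
                nlinarith
              · have hx := hpos v
                have h2 : 0 < (1 - t.1) * x.1 v := by
                  apply mul_pos (by linarith)
                  exact lt_of_le_of_ne hx (Ne.symm hv)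
                have h3 : (0:ℝ) ≤ t.1 * (if v = c then 1 else 0) :=
                  mul_nonneg ht0 (by positivity)
                intro hcon
                nlinarith
          rw [this, Finset.image_insert]
          exact hins _ hK
  refine ⟨⟨⟨fun q => ⟨fun v => (1 - q.1.1) * q.2.1 v + q.1.1 * (if v = c then 1 else 0),
      key q.1 q.2⟩, ?_⟩, ?_, ?_⟩⟩
  · apply Continuous.subtype_mk
    apply continuous_pi
    intro v
    have hc1 : Continuous fun q : unitInterval × GeomReal m K => (q.1 : ℝ) :=
      continuous_subtype_val.comp continuous_fst
    have hc2 : Continuous fun q : unitInterval × GeomReal m K => q.2.1 v :=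
      (continuous_apply v).comp (continuous_subtype_val.comp continuous_snd)
    exact ((continuous_const.sub hc1).mul hc2).add (hc1.mul continuous_const)
  · intro x
    apply Subtype.ext
    funext v
    simp
  · intro x
    apply Subtype.ext
    funext v
    simp [hp]

noncomputable section

def pad (m : ℕ) (f : Fin m → ℝ) (j : ℕ) : ℝ := if h : j < m then f ⟨j, h⟩ else 0

lemma pad_nonneg {m : ℕ} {f : Fin m → ℝ} (hf : ∀ v, 0 ≤ f v) (j : ℕ) : 0 ≤ pad m f j := by
  unfold pad; split
  · exact hf _
  · exact le_refl 0

lemma mem_supp_iff {m : ℕ} (f : Fin m → ℝ) (j : ℕ) :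
    j ∈ (Finset.univ.filter (fun v => f v ≠ 0)).image Fin.val ↔ pad m f j ≠ 0 := by
  simp only [Finset.mem_image, Finset.mem_filter, Finset.mem_univ, true_and]
  constructor
  · rintro ⟨v, hv, rfl⟩
    unfold pad
    rw [dif_pos v.isLt]
    simpa using hv
  · intro h
    unfold pad at h
    split at h
    · exact ⟨_, h, rfl⟩
    · exact absurd rfl h

lemma sum_pad {m : ℕ} (f : Fin m → ℝ) : ∑ j ∈ Finset.range m, pad m f j = ∑ v, f v := by
  rw [← Fin.sum_univ_eq_sum_range]
  apply Finset.sum_congr rfl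
  intro v _
  unfold pad
  rw [dif_pos v.isLt]

lemma max_add_max_neg (a : ℝ) : max a 0 + max (-a) 0 = |a| := by
  rcases le_total a 0 with h | h
  · rw [max_eq_right h, max_eq_left (by linarith), abs_of_nonpos h]; ring
  · rw [max_eq_left h, max_eq_right (by linarith), abs_of_nonneg h]; ring

lemma max_sub_max_neg (a : ℝ) : max a 0 - max (-a) 0 = a := by
  rcases le_total a 0 with h | h
  · rw [max_eq_right h, max_eq_left (by linarith)]; ring
  · rw [max_eq_left h, max_eq_right (by linarith)]; ring

variable (n : ℕ) (T : Finset ℕ)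

/-- The order isomorphism enumerating `T`. -/
def EIso : Fin T.card ≃o {x // x ∈ T} := T.orderIsoOfFin rfl

/-- Forward coordinates. -/
def toE (f : Fin (2 * n + 1) → ℝ) : EuclideanSpace ℝ (Fin T.card) :=
  WithLp.toLp 2 fun μ => pad (2 * n + 1) f ((EIso T μ : ℕ)) - pad (2 * n + 1) f (n + (EIso T μ : ℕ))

/-- Backward coordinates (unnormalized). -/
def stuff (y : EuclideanSpace ℝ (Fin T.card)) (j : ℕ) : ℝ :=
  if h : j ∈ T then max (y ((EIso T).symm ⟨j, h⟩)) 0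
  else if h2 : n < j ∧ j - n ∈ T then max (-(y ((EIso T).symm ⟨j - n, h2.2⟩))) 0
  else 0

variable {n T}

lemma stuff_nonneg (y : EuclideanSpace ℝ (Fin T.card)) (j : ℕ) : 0 ≤ stuff n T y j := by
  unfold stuff
  split
  · exact le_max_right _ _
  · split
    · exact le_max_right _ _
    · exact le_refl 0

lemma stuff_mem (y : EuclideanSpace ℝ (Fin T.card)) {i : ℕ} (hi : i ∈ T) :
    stuff n T y i = max (y ((EIso T).symm ⟨i, hi⟩)) 0 := dif_pos hi

lemma stuff_shift (hT : T ⊆ Finset.Icc 1 n) (y : EuclideanSpace ℝ (Fin T.card))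
    {i : ℕ} (hi : i ∈ T) :
    stuff n T y (n + i) = max (-(y ((EIso T).symm ⟨i, hi⟩))) 0 := by
  have hb : 1 ≤ i ∧ i ≤ n := by simpa using Finset.mem_Icc.mp (hT hi)
  have h1 : n + i ∉ T := fun h => by
    have : 1 ≤ n + i ∧ n + i ≤ n := by simpa using Finset.mem_Icc.mp (hT h)
    omega
  have h2 : n < n + i ∧ n + i - n ∈ T := ⟨by omega, by simpa using hi⟩
  have he : (⟨n + i - n, h2.2⟩ : {x // x ∈ T}) = ⟨i, hi⟩ := Subtype.ext (show n + i - n = i by omega)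
  rw [stuff, dif_neg h1, dif_pos h2, he]

lemma stuff_zero (hT : T ⊆ Finset.Icc 1 n) (y : EuclideanSpace ℝ (Fin T.card))
    {j : ℕ} (hj : j ∉ T ∪ T.image (n + ·)) : stuff n T y j = 0 := by
  rw [Finset.mem_union, Finset.mem_image] at hj
  push_neg at hj
  rw [stuff, dif_neg hj.1, dif_neg]
  rintro ⟨h1, h2⟩
  exact hj.2 _ h2 (by omega)

lemma sum_over_e (g : ℕ → ℝ) : ∑ μ : Fin T.card, g ((EIso T μ : ℕ)) = ∑ i ∈ T, g i := by
  rw [← Finset.sum_attach T (fun i => g i), ← Finset.univ_eq_attach]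
  exact Equiv.sum_comp (EIso T).toEquiv (fun a : {x // x ∈ T} => g (a : ℕ))

lemma sum_over_e' (g : {x // x ∈ T} → ℝ) :
    ∑ i ∈ T.attach, g i = ∑ μ : Fin T.card, g (EIso T μ) := by
  rw [← Finset.univ_eq_attach]
  exact (Equiv.sum_comp (EIso T).toEquiv g).symm

lemma union_subset_range (hn : 1 ≤ n) (hT : T ⊆ Finset.Icc 1 n) :
    T ∪ T.image (n + ·) ⊆ Finset.range (2 * n + 1) := by
  intro j hj
  rw [Finset.mem_union, Finset.mem_image] at hj
  rw [Finset.mem_range]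
  rcases hj with h | ⟨i, hi, rfl⟩
  · have : 1 ≤ j ∧ j ≤ n := by simpa using Finset.mem_Icc.mp (hT h)
    omega
  · have : 1 ≤ i ∧ i ≤ n := by simpa using Finset.mem_Icc.mp (hT hi)
    omega

lemma disjoint_union (hT : T ⊆ Finset.Icc 1 n) : Disjoint T (T.image (n + ·)) := by
  rw [Finset.disjoint_left]
  rintro a ha hb
  obtain ⟨i, hi, hee⟩ := Finset.mem_image.mp hb
  have h1 : 1 ≤ a ∧ a ≤ n := by simpa using Finset.mem_Icc.mp (hT ha)
  have h2 : 1 ≤ i ∧ i ≤ n := by simpa using Finset.mem_Icc.mp (hT hi)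
  omega

lemma sum_split (hn : 1 ≤ n) (hT : T ⊆ Finset.Icc 1 n) (g : ℕ → ℝ)
    (hg0 : ∀ j ∈ Finset.range (2 * n + 1), j ∉ T ∪ T.image (n + ·) → g j = 0) :
    ∑ j ∈ Finset.range (2 * n + 1), g j = ∑ i ∈ T, (g i + g (n + i)) := by
  rw [← Finset.sum_subset (union_subset_range hn hT) hg0,
    Finset.sum_union (disjoint_union hT),
    Finset.sum_image (fun a _ b _ h => Nat.add_left_cancel h),
    Finset.sum_add_distrib]

lemma max_ne_zero_pos {a : ℝ} (h : max a 0 ≠ 0) : 0 < a := by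
  rcases le_or_gt a 0 with h' | h'
  · exact absurd (max_eq_right h') h
  · exact h'

lemma stuff_ne_zero_cases {y : EuclideanSpace ℝ (Fin T.card)} {j : ℕ}
    (h : stuff n T y j ≠ 0) : j ∈ T ∨ (n < j ∧ j - n ∈ T) := by
  unfold stuff at h
  split at h
  · left; assumption
  · split at h
    · right; assumption
    · exact absurd rfl h

lemma max_idem_left {a b : ℝ} (ha : 0 ≤ a) (hb : 0 ≤ b) (hd : a = 0 ∨ b = 0) :
    max (a - b) 0 = a := by
  rcases hd with rfl | rfl
  · rw [max_eq_right (by linarith)]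
  · simpa using max_eq_left ha

lemma max_idem_right {a b : ℝ} (ha : 0 ≤ a) (hb : 0 ≤ b) (hd : a = 0 ∨ b = 0) :
    max (-(a - b)) 0 = b := by
  rcases hd with rfl | rfl
  · simpa using max_eq_left hb
  · rw [max_eq_right (by linarith)]

lemma sum_stuff (hn : 1 ≤ n) (hT : T ⊆ Finset.Icc 1 n) (y : EuclideanSpace ℝ (Fin T.card)) :
    ∑ v : Fin (2 * n + 1), stuff n T y v.val = ∑ μ, |y μ| := by
  rw [Fin.sum_univ_eq_sum_range (fun j => stuff n T y j),
    sum_split hn hT _ (fun j _ hj => stuff_zero hT y hj),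
    ← Finset.sum_attach T (fun i => stuff n T y i + stuff n T y (n + i))]
  have h1 : ∀ i ∈ T.attach, stuff n T y i.1 + stuff n T y (n + i.1)
      = |y ((EIso T).symm i)| := by
    intro i _
    rw [stuff_mem y i.2, stuff_shift hT y i.2, max_add_max_neg]
  rw [Finset.sum_congr rfl h1, sum_over_e' (fun i => |y ((EIso T).symm i)|)]
  apply Finset.sum_congr rfl
  intro μ _
  rw [OrderIso.symm_apply_apply]

lemma dichotomy {S : Finset ℕ} (hT : T ⊆ Finset.Icc 1 n)
    (x : GeomReal (2 * n + 1) (fun t => crossFace n t ∧ t ⊆ S))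
    {i : ℕ} (hi : i ∈ T) :
    pad (2 * n + 1) x.1 i = 0 ∨ pad (2 * n + 1) x.1 (n + i) = 0 := by
  have hpair := x.2.2.2.1.2 i (hT hi)
  by_contra hcon
  push_neg at hcon
  exact hpair ⟨(mem_supp_iff x.1 i).mpr hcon.1, (mem_supp_iff x.1 (n + i)).mpr hcon.2⟩

lemma supp_subset_union {S : Finset ℕ} (hS : S = T ∪ T.image (n + ·))
    (x : GeomReal (2 * n + 1) (fun t => crossFace n t ∧ t ⊆ S))
    {j : ℕ} (hj : pad (2 * n + 1) x.1 j ≠ 0) : j ∈ T ∪ T.image (n + ·) := by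
  rw [← hS]
  exact x.2.2.2.2 ((mem_supp_iff x.1 j).mpr hj)

lemma sum_abs_toE (hn : 1 ≤ n) (hT : T ⊆ Finset.Icc 1 n) {S : Finset ℕ}
    (hS : S = T ∪ T.image (n + ·))
    (x : GeomReal (2 * n + 1) (fun t => crossFace n t ∧ t ⊆ S)) :
    ∑ μ, |toE n T x.1 μ| = 1 := by
  have h1 : ∀ μ ∈ (Finset.univ : Finset (Fin T.card)), |toE n T x.1 μ| =
      pad (2 * n + 1) x.1 ((EIso T μ : ℕ)) + pad (2 * n + 1) x.1 (n + (EIso T μ : ℕ)) := by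
    intro μ _
    have hd := dichotomy hT x (EIso T μ).2
    have ha := pad_nonneg x.2.1 ((EIso T μ : ℕ))
    have hb := pad_nonneg x.2.1 (n + (EIso T μ : ℕ))
    simp only [toE, PiLp.toLp_apply]
    rcases hd with h | h
    · rw [h, zero_sub, abs_neg, abs_of_nonneg hb, zero_add]
    · rw [h, sub_zero, abs_of_nonneg ha, add_zero]
  rw [Finset.sum_congr rfl h1,
    sum_over_e (fun i => pad (2 * n + 1) x.1 i + pad (2 * n + 1) x.1 (n + i)),
    ← sum_split hn hT, sum_pad, x.2.2.1]
  intro j _ hj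
  by_contra hc
  exact hj (supp_subset_union hS x hc)

lemma sum_abs_pos {k : ℕ} {y : EuclideanSpace ℝ (Fin k)} (hy : y ≠ 0) :
    0 < ∑ μ, |y μ| := by
  obtain ⟨μ0, hμ0⟩ : ∃ μ, y μ ≠ 0 := by
    by_contra hcon
    push_neg at hcon
    exact hy (PiLp.ext fun μ => by simp [hcon μ])
  calc (0:ℝ) < |y μ0| := abs_pos.mpr hμ0
    _ ≤ ∑ μ, |y μ| := Finset.single_le_sum (f := fun μ => |y μ|) (fun i _ => abs_nonneg _) (Finset.mem_univ μ0)

lemma continuous_pad {m : ℕ} (j : ℕ) : Continuous fun f : Fin m → ℝ => pad m f j := by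
  unfold pad
  split
  · exact continuous_apply _
  · exact continuous_const

lemma mul_max_zero {c a : ℝ} (hc : 0 ≤ c) : max (c * a) 0 = c * max a 0 := by
  rw [mul_max_of_nonneg _ _ hc, mul_zero]

lemma pad_val {m : ℕ} (f : Fin m → ℝ) (v : Fin m) : pad m f v.val = f v := by
  unfold pad
  rw [dif_pos v.isLt]

theorem sphere_case (n : ℕ) (hn : 2 ≤ n) (T : Finset ℕ) (hT : T ⊆ Finset.Icc 1 n)
    (S : Finset ℕ) (hS : S = T ∪ T.image (n + ·)) :
    Nonempty (ContinuousMap.HomotopyEquiv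
      (GeomReal (2 * n + 1) (fun t => crossFace n t ∧ t ⊆ S))
      (Metric.sphere (0 : EuclideanSpace ℝ (Fin T.card)) 1)) := by
  have hn1 : 1 ≤ n := by omega
  set X := GeomReal (2 * n + 1) (fun t => crossFace n t ∧ t ⊆ S) with hX
  -- basic facts
  have htoE_ne : ∀ x : X, toE n T x.1 ≠ 0 := by
    intro x h0
    have := sum_abs_toE hn1 hT hS x
    rw [h0] at this
    simp at this
  have hnorm_pos : ∀ x : X, 0 < ‖toE n T x.1‖ := fun x =>
    norm_pos_iff.mpr (htoE_ne x)
  -- the backward map's membership proof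
  have hGmem : ∀ y : Metric.sphere (0 : EuclideanSpace ℝ (Fin T.card)) 1,
      (∀ v : Fin (2 * n + 1), 0 ≤ stuff n T y.1 v.val / (∑ μ, |y.1 μ|)) ∧
      ((∑ v : Fin (2 * n + 1), stuff n T y.1 v.val / (∑ μ, |y.1 μ|)) = 1) ∧
      ((fun t => crossFace n t ∧ t ⊆ S) ((Finset.univ.filter
        (fun v : Fin (2 * n + 1) => stuff n T y.1 v.val / (∑ μ, |y.1 μ|) ≠ 0)).image Fin.val)) := by
    intro y
    have hy1 : ‖y.1‖ = 1 := by
      have := y.2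
      rwa [mem_sphere_zero_iff_norm] at this
    have hyne : y.1 ≠ 0 := by
      intro h
      rw [h] at hy1
      simp at hy1
    have hc : 0 < ∑ μ, |y.1 μ| := sum_abs_pos hyne
    have hstuffiff : ∀ v : Fin (2 * n + 1),
        (stuff n T y.1 v.val / (∑ μ, |y.1 μ|) ≠ 0) ↔ stuff n T y.1 v.val ≠ 0 := by
      intro v
      rw [div_ne_zero_iff]
      exact ⟨fun h => h.1, fun h => ⟨h, ne_of_gt hc⟩⟩
    refine ⟨fun v => div_nonneg (stuff_nonneg _ _) (le_of_lt hc), ?_, ?_, ?_⟩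
    · rw [← Finset.sum_div, sum_stuff hn1 hT, div_self (ne_of_gt hc)]
    · -- crossFace
      constructor
      · intro j hj
        obtain ⟨v, hv, rfl⟩ : ∃ v : Fin (2 * n + 1), stuff n T y.1 v.val ≠ 0 ∧ v.val = j := by
          simp only [Finset.mem_image, Finset.mem_filter, Finset.mem_univ, true_and] at hj
          obtain ⟨v, hv1, hv2⟩ := hj
          exact ⟨v, (hstuffiff v).mp hv1, hv2⟩
        rcases stuff_ne_zero_cases hv with h | h
        · have : 1 ≤ v.val ∧ v.val ≤ n := by simpa using Finset.mem_Icc.mp (hT h)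
          rw [Finset.mem_Icc]; omega
        · have : 1 ≤ v.val - n ∧ v.val - n ≤ n := by simpa using Finset.mem_Icc.mp (hT h.2)
          rw [Finset.mem_Icc]; omega
      · rintro i hi ⟨hi1, hi2⟩
        have hmem : ∀ j : ℕ, j ∈ ((Finset.univ.filter
            (fun v : Fin (2 * n + 1) => stuff n T y.1 v.val / (∑ μ, |y.1 μ|) ≠ 0)).image Fin.val)
            → stuff n T y.1 j ≠ 0 := by
          intro j hj
          simp only [Finset.mem_image, Finset.mem_filter, Finset.mem_univ, true_and] at hj
          obtain ⟨v, hv1, rfl⟩ := hj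
          exact (hstuffiff v).mp hv1
        have h1 := hmem i hi1
        have h2 := hmem (n + i) hi2
        have hiT : i ∈ T := by
          rcases stuff_ne_zero_cases h1 with h | h
          · exact h
          · exfalso
            have := Finset.mem_Icc.mp hi
            omega
        have hpos : 0 < y.1 ((EIso T).symm ⟨i, hiT⟩) := by
          rw [stuff_mem y.1 hiT] at h1
          exact max_ne_zero_pos h1
        have hneg : y.1 ((EIso T).symm ⟨i, hiT⟩) < 0 := by
          rw [stuff_shift hT y.1 hiT] at h2
          have := max_ne_zero_pos h2
          linarith
        linarith
    · -- subset S
      intro j hj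
      simp only [Finset.mem_image, Finset.mem_filter, Finset.mem_univ, true_and] at hj
      obtain ⟨v, hv1, rfl⟩ := hj
      have hv := (hstuffiff v).mp hv1
      rw [hS]
      rcases stuff_ne_zero_cases hv with h | h
      · exact Finset.mem_union_left _ h
      · refine Finset.mem_union_right _ (Finset.mem_image.mpr ⟨v.val - n, h.2, by omega⟩)
  -- Forward and backward maps
  set F : X → Metric.sphere (0 : EuclideanSpace ℝ (Fin T.card)) 1 :=
    fun x => ⟨‖toE n T x.1‖⁻¹ • toE n T x.1, by
      rw [mem_sphere_zero_iff_norm, norm_smul, norm_inv, norm_norm,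
        inv_mul_cancel₀ (ne_of_gt (hnorm_pos x))]⟩ with hF
  set G : Metric.sphere (0 : EuclideanSpace ℝ (Fin T.card)) 1 → X :=
    fun y => ⟨fun v => stuff n T y.1 v.val / (∑ μ, |y.1 μ|), hGmem y⟩ with hG
  -- G ∘ F = id
  have hGF : ∀ x : X, G (F x) = x := by
    intro x
    apply Subtype.ext
    funext v
    have hNpos : 0 < ‖toE n T x.1‖ := hnorm_pos x
    set N := ‖toE n T x.1‖ with hN
    have hFx : ∀ μ, (F x).1 μ = N⁻¹ * toE n T x.1 μ := fun μ => rfl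
    have hc : (∑ μ, |(F x).1 μ|) = N⁻¹ := by
      calc ∑ μ, |(F x).1 μ| = ∑ μ, N⁻¹ * |toE n T x.1 μ| := by
            refine Finset.sum_congr rfl fun μ _ => ?_
            rw [hFx, abs_mul, abs_of_nonneg (by positivity)]
        _ = N⁻¹ * ∑ μ, |toE n T x.1 μ| := (Finset.mul_sum _ _ _).symm
        _ = N⁻¹ := by rw [sum_abs_toE hn1 hT hS x, mul_one]
    show stuff n T (F x).1 v.val / (∑ μ, |(F x).1 μ|) = x.1 v
    rw [hc, div_eq_mul_inv, inv_inv]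
    by_cases hvT : (v.val : ℕ) ∈ T
    · have he : ((EIso T ((EIso T).symm ⟨v.val, hvT⟩) : ℕ)) = v.val := by
        rw [OrderIso.apply_symm_apply]
      have htoe : toE n T x.1 ((EIso T).symm ⟨v.val, hvT⟩)
          = pad (2 * n + 1) x.1 v.val - pad (2 * n + 1) x.1 (n + v.val) := by
        simp only [toE, PiLp.toLp_apply]
        rw [he]
      have hd := dichotomy hT x hvT
      have ha := pad_nonneg x.2.1 v.val
      have hb := pad_nonneg x.2.1 (n + v.val)
      rw [stuff_mem _ hvT, hFx, htoe,
        mul_max_zero (le_of_lt (inv_pos.mpr hNpos)),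
        max_idem_left ha hb hd, pad_val, mul_comm N⁻¹ (x.1 v), mul_assoc,
        inv_mul_cancel₀ (ne_of_gt hNpos), mul_one]
    · by_cases hv2 : n < (v.val : ℕ) ∧ (v.val : ℕ) - n ∈ T
      · have hnn : n + (v.val - n) = v.val := by omega
        have he : ((EIso T ((EIso T).symm ⟨v.val - n, hv2.2⟩) : ℕ)) = v.val - n := by
          rw [OrderIso.apply_symm_apply]
        have htoe : toE n T x.1 ((EIso T).symm ⟨v.val - n, hv2.2⟩)
            = pad (2 * n + 1) x.1 (v.val - n) - pad (2 * n + 1) x.1 v.val := by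
          simp only [toE, PiLp.toLp_apply]
          rw [he, hnn]
        have hd := dichotomy hT x hv2.2
        rw [hnn] at hd
        have ha := pad_nonneg x.2.1 (v.val - n)
        have hb := pad_nonneg x.2.1 v.val
        show stuff n T (F x).1 v.val * N = x.1 v
        unfold stuff
        rw [dif_neg hvT, dif_pos hv2, hFx, htoe, ← mul_neg,
          mul_max_zero (le_of_lt (inv_pos.mpr hNpos)),
          max_idem_right ha hb hd, pad_val, mul_comm N⁻¹ (x.1 v), mul_assoc,
          inv_mul_cancel₀ (ne_of_gt hNpos), mul_one]
      · show stuff n T (F x).1 v.val * N = x.1 v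
        unfold stuff
        rw [dif_neg hvT, dif_neg hv2, zero_mul]
        by_contra hfv
        have hpad : pad (2 * n + 1) x.1 v.val ≠ 0 := by
          rw [pad_val]
          exact fun h => hfv h.symm
        have := supp_subset_union hS x hpad
        rw [Finset.mem_union] at this
        rcases this with h | h
        · exact hvT h
        · obtain ⟨i, hi, hii⟩ := Finset.mem_image.mp h
          have hbd : 1 ≤ i ∧ i ≤ n := by simpa using Finset.mem_Icc.mp (hT hi)
          exact hv2 ⟨by omega, by
            have : v.val - n = i := by omega
            rwa [this]⟩
  -- F ∘ G = id
  have hFG : ∀ y, F (G y) = y := by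
    intro y
    apply Subtype.ext
    have hy1 : ‖y.1‖ = 1 := mem_sphere_zero_iff_norm.mp y.2
    have hyne : y.1 ≠ 0 := fun h => by rw [h] at hy1; simp at hy1
    have hcpos : 0 < ∑ μ, |y.1 μ| := sum_abs_pos hyne
    have hkey : toE n T (G y).1 = (∑ μ, |y.1 μ|)⁻¹ • y.1 := by
      ext μ
      have hbd : 1 ≤ (EIso T μ : ℕ) ∧ (EIso T μ : ℕ) ≤ n := by
        simpa using Finset.mem_Icc.mp (hT (EIso T μ).2)
      have h1 : (EIso T μ : ℕ) < 2 * n + 1 := by omega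
      have h2 : n + (EIso T μ : ℕ) < 2 * n + 1 := by omega
      have hp1 : pad (2 * n + 1) (G y).1 ((EIso T μ : ℕ))
          = stuff n T y.1 ((EIso T μ : ℕ)) / (∑ μ, |y.1 μ|) := by
        unfold pad
        rw [dif_pos h1]
      have hp2 : pad (2 * n + 1) (G y).1 (n + (EIso T μ : ℕ))
          = stuff n T y.1 (n + (EIso T μ : ℕ)) / (∑ μ, |y.1 μ|) := by
        unfold pad
        rw [dif_pos h2]
      have hsub : (⟨(EIso T μ : ℕ), (EIso T μ).2⟩ : {z // z ∈ T}) = EIso T μ :=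
        Subtype.ext rfl
      show pad (2 * n + 1) (G y).1 ((EIso T μ : ℕ))
          - pad (2 * n + 1) (G y).1 (n + (EIso T μ : ℕ)) = _
      rw [hp1, hp2, stuff_mem y.1 (EIso T μ).2, stuff_shift hT y.1 (EIso T μ).2, hsub,
        OrderIso.symm_apply_apply, div_sub_div_same, max_sub_max_neg]
      rw [PiLp.smul_apply, smul_eq_mul, div_eq_inv_mul]
    have hnorm2 : ‖toE n T (G y).1‖ = (∑ μ, |y.1 μ|)⁻¹ := by
      rw [hkey, norm_smul, hy1, mul_one, norm_inv, Real.norm_eq_abs, abs_of_pos hcpos]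
    show ‖toE n T (G y).1‖⁻¹ • toE n T (G y).1 = y.1
    rw [hnorm2, hkey, inv_inv, smul_smul, mul_inv_cancel₀ (ne_of_gt hcpos), one_smul]
  -- continuity of F
  have htoEc : Continuous fun x : X => toE n T x.1 := by
    refine (PiLp.continuous_toLp 2 _).comp' (continuous_pi fun μ => ?_)
    exact ((continuous_pad _).comp continuous_subtype_val).sub
      ((continuous_pad _).comp continuous_subtype_val)
  have hcontF : Continuous F := by
    apply Continuous.subtype_mk
    exact (htoEc.norm.inv₀ (fun x => ne_of_gt (hnorm_pos x))).smul htoEc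
  -- continuity of G
  have hcontG : Continuous G := by
    apply Continuous.subtype_mk
    apply continuous_pi
    intro v
    apply Continuous.div
    · by_cases hvT : (v.val : ℕ) ∈ T
      · simp only [stuff, dif_pos hvT]
        exact ((PiLp.continuous_apply 2 _ _).comp continuous_subtype_val).max continuous_const
      · by_cases hv2 : n < (v.val : ℕ) ∧ (v.val : ℕ) - n ∈ T
        · simp only [stuff, dif_neg hvT, dif_pos hv2]
          exact ((PiLp.continuous_apply 2 _ _).comp continuous_subtype_val).neg.max continuous_const
        · simp only [stuff, dif_neg hvT, dif_neg hv2]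
          exact continuous_const
    · exact continuous_finset_sum _ fun μ _ =>
        ((PiLp.continuous_apply 2 _ μ).comp continuous_subtype_val).abs
    · intro y
      have hy1 : ‖y.1‖ = 1 := mem_sphere_zero_iff_norm.mp y.2
      have hyne : y.1 ≠ 0 := fun h => by rw [h] at hy1; simp at hy1
      exact ne_of_gt (sum_abs_pos hyne)
  exact ⟨(Homeomorph.mk ⟨F, G, hGF, hFG⟩ hcontF hcontG).toHomotopyEquiv⟩


lemma cone_contract (n : ℕ) (hn : 2 ≤ n) (T : Finset ℕ) (c : ℕ)
    (hc1 : c ∈ chiSupp n T) (hcb : 1 ≤ c ∧ c ≤ 2 * n)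
    (hpartner : ∀ i ∈ Finset.Icc 1 n,
      (i = c → n + i ∉ chiSupp n T) ∧ (n + i = c → i ∉ chiSupp n T)) :
    ContractibleSpace
      (GeomReal (2 * n + 1) (fun t => crossFace n t ∧ t ⊆ chiSupp n T)) := by
  have hKins : ∀ t : Finset ℕ, (crossFace n t ∧ t ⊆ chiSupp n T) →
      (crossFace n (insert c t) ∧ insert c t ⊆ chiSupp n T) := by
    rintro t ⟨⟨hsub, hpairs⟩, hts⟩
    refine ⟨⟨?_, ?_⟩, Finset.insert_subset hc1 hts⟩
    · intro j hj
      rcases Finset.mem_insert.mp hj with rfl | hj'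
      · rw [Finset.mem_Icc]; omega
      · exact hsub hj'
    · rintro i hi ⟨ha, hb⟩
      have hib := Finset.mem_Icc.mp hi
      rcases Finset.mem_insert.mp ha with rfl | ha' <;>
        rcases Finset.mem_insert.mp hb with heq | hb'
      · omega
      · exact (hpartner i hi).1 rfl (hts hb')
      · exact (hpartner i hi).2 heq (hts ha')
      · exact hpairs i hi ⟨ha', hb'⟩
  have hsing : crossFace n ({c} : Finset ℕ) ∧ ({c} : Finset ℕ) ⊆ chiSupp n T := by
    have := hKins ∅ ⟨⟨Finset.empty_subset _, fun i _ => by simp⟩, Finset.empty_subset _⟩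
    simpa using this
  have hcfin : c < 2 * n + 1 := by omega
  have := geomReal_contractible (2 * n + 1)
    (fun t => crossFace n t ∧ t ⊆ chiSupp n T) ⟨c, hcfin⟩
    (fun t ht => hKins t ht) hsing
  exact this

lemma one_not_mem_chiSupp {n : ℕ} {T : Finset ℕ} (hn : 2 ≤ n)
    (hT : T ⊆ Finset.Icc 1 n) (h1 : 1 ∉ T) : 1 ∉ chiSupp n T := by
  rw [mem_chiSupp hT]
  rintro (h | ⟨i, hi, h2, heq⟩ | ⟨heq, _⟩)
  · exact h1 h
  · omega
  · omega

end

end KleinAux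

open KleinAux in
/-- Let `n ≥ 2` and `T ⊆ {1,…,n}` nonempty. If `|supp(χ_T)|` is even then
the realization of the induced subcomplex `K_{χ,T}` of the cross polytope boundary on
`supp(χ_T)` is homotopy equivalent to the sphere `S^{|T|−1}`; if `|supp(χ_T)|` is odd then
it is contractible. -/
theorem geomReal_subcomplex_klein (n : ℕ) (hn : 2 ≤ n) (T : Finset ℕ)
    (hT : T ⊆ Finset.Icc 1 n) (hne : T.Nonempty) :
    (Even (chiSupp n T).card →
      Nonempty (ContinuousMap.HomotopyEquiv
        (GeomReal (2 * n + 1) (fun t => crossFace n t ∧ t ⊆ chiSupp n T))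
        (Metric.sphere (0 : EuclideanSpace ℝ (Fin T.card)) 1))) ∧
    (¬ Even (chiSupp n T).card →
      ContractibleSpace
        (GeomReal (2 * n + 1) (fun t => crossFace n t ∧ t ⊆ chiSupp n T))) := by
  have hcardpos : 0 < T.card := Finset.card_pos.mpr hne
  constructor
  · intro hev
    by_cases h1 : 1 ∈ T <;> by_cases he : Even T.card
    · exfalso
      rw [card_chiSupp_caseA hT h1 he] at hev
      obtain ⟨r, hr⟩ := hev
      omega
    · exact sphere_case n hn T hT _ (chiSupp_matched hT (iff_of_true h1 he))
    · exact sphere_case n hn T hT _ (chiSupp_matched hT (iff_of_false h1 (not_not_intro he)))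
    · exfalso
      rw [card_chiSupp_caseB hT h1 he] at hev
      obtain ⟨r, hr⟩ := hev
      omega
  · intro hodd
    by_cases h1 : 1 ∈ T <;> by_cases he : Even T.card
    · -- cone with apex 1
      apply cone_contract n hn T 1
      · exact (mem_chiSupp hT 1).mpr (Or.inl h1)
      · omega
      · intro i hi
        have hib := Finset.mem_Icc.mp hi
        constructor
        · rintro rfl
          rw [mem_chiSupp hT]
          rintro (h | ⟨i2, hi2, h2, heq⟩ | ⟨heq, hodd2⟩)
          · have := Finset.mem_Icc.mp (hT h)
            omega
          · omega
          · exact hodd2 he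
        · intro heq
          omega
    · exfalso
      rw [chiSupp_matched hT (iff_of_true h1 he), card_union hT] at hodd
      exact hodd ⟨T.card, by omega⟩
    · exfalso
      rw [chiSupp_matched hT (iff_of_false h1 (not_not_intro he)), card_union hT] at hodd
      exact hodd ⟨T.card, by omega⟩
    · -- cone with apex n + 1
      apply cone_contract n hn T (n + 1)
      · exact (mem_chiSupp hT (n + 1)).mpr (Or.inr (Or.inr ⟨rfl, he⟩))
      · omega
      · intro i hi
        have hib := Finset.mem_Icc.mp hi
        constructor
        · intro heq
          omega
        · intro heq
          have : i = 1 := by omega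
          rw [this]
          exact one_not_mem_chiSupp hn hT h1
end
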